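/- arXiv:1101.5067 — 3 statements merged into one kernel-verified Lean document; each statement's English description precedes it below -/
import Mathlib

section
/- Let S = (X_0,…,X_{d−1}) be a d-symbol with balanced quotient Q = Q(S) and core C = C(S), and set x_i = |X_i|. There exists a bijection ω from H(S) onto the disjoint union H(Q) ⊔ H(C) such that for every d-hook data tuple δ = (c_0,…,c_{d−1}; k) and every z ∈ H(S): if ω(z) ∈ H(Q) then h^δ(z) = h̄^{δ_S}(ω(z)), and if ω(z) ∈ H(C) then h^δ(z) = h^δ(ω(z)). Here δ_S = (c_0 + x_0 k, …, c_{d−1} + x_{d−1} k; k). -/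
/-- `X^{+s} = (X + s) ∪ {0,…,s−1}` for a β-set `X`. -/
def shiftUp (X : Finset ℕ) (s : ℕ) : Finset ℕ :=
  X.image (· + s) ∪ Finset.range s

/-- The `d`-symbol `s_d(X)` associated to a β-set `X`:
`X_i^{(d)} = {k ∈ ℕ : i + k*d ∈ X}`. -/
def sd (d : ℕ) (X : Finset ℕ) : Fin d → Finset ℕ :=
  fun i => (X.filter fun a => a % d = (i : ℕ)).image fun a => a / d

/-- The inverse of `s_d`, recovering the β-set of a `d`-symbol. -/
def sdInv (d : ℕ) (S : Fin d → Finset ℕ) : Finset ℕ :=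
  Finset.univ.biUnion fun i => (S i).image fun k => (i : ℕ) + k * d

/-- Hooks of a β-set `X`: pairs `(a,b)` with `a > b`, `a ∈ X`, `b ∉ X`. -/
def betaHooks (X : Finset ℕ) : Finset (ℕ × ℕ) :=
  (X ×ˢ Finset.range (X.sup id + 1)).filter fun p => p.2 < p.1 ∧ p.2 ∉ X

/-- Hooks of a `d`-symbol `S`: quadruples `(a,b,i,j)` with `a ∈ S i`, `b ∉ S j`,
and either `a > b`, or `a = b` and `i > j`. -/
def symbolHooks {d : ℕ} (S : Fin d → Finset ℕ) : Finset (ℕ × ℕ × Fin d × Fin d) :=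
  (Finset.range ((Finset.univ.sup fun i => (S i).sup id) + 1) ×ˢ
      Finset.range ((Finset.univ.sup fun i => (S i).sup id) + 1) ×ˢ
      (Finset.univ : Finset (Fin d)) ×ˢ (Finset.univ : Finset (Fin d))).filter
    fun z => z.1 ∈ S z.2.2.1 ∧ z.2.1 ∉ S z.2.2.2 ∧
      (z.2.1 < z.1 ∨ (z.1 = z.2.1 ∧ z.2.2.2 < z.2.2.1))

/-- The partition `p(X)` of a β-set `X = {a_1 > … > a_t}`, as the multiset of the
nonzero numbers among `a_i − (t−i)`; the element `a` contributes the part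
`a − #{b ∈ X : b < a}`. -/
def partitionOf (X : Finset ℕ) : Multiset ℕ :=
  Multiset.filter (· ≠ 0) (X.val.map fun a => a - (X.filter (· < a)).card)

/-- `r`, the maximal number of parts among the partitions `p(X_i)` of a `d`-symbol. -/
def quotCard {d : ℕ} (S : Fin d → Finset ℕ) : ℕ :=
  Finset.univ.sup fun i => Multiset.card (partitionOf (S i))

/-- `Y` is the balanced quotient `Q(S)` of `S`: each `Y i` is the (unique) β-set of
cardinality `r` with `p(Y i) = p(S i)`, where `r` is the maximal number of parts
among the `p(S i)`. -/
def IsBalancedQuotient {d : ℕ} (S Y : Fin d → Finset ℕ) : Prop :=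
  ∀ i, (Y i).card = quotCard S ∧ partitionOf (Y i) = partitionOf (S i)

/-- The core `C(S) = ([x_0],…,[x_{d−1}])` of a `d`-symbol, `x_i = |X_i|`. -/
def coreSymbol {d : ℕ} (S : Fin d → Finset ℕ) : Fin d → Finset ℕ :=
  fun i => Finset.range (S i).card

/-- The `δ`-length `k(a−b) + c_i − c_j` of a hook `(a,b,i,j)`, for the
`d`-hook data tuple `δ = (c_0,…,c_{d−1};k)`. -/
noncomputable def hookLen {d : ℕ} (c : Fin d → ℝ) (k : ℝ)
    (z : ℕ × ℕ × Fin d × Fin d) : ℝ :=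
  k * ((z.1 - z.2.1 : ℕ) : ℝ) + c z.2.2.1 - c z.2.2.2

/-- The multiset `𝓗^δ(S)` of `δ`-lengths of all hooks of `S`. -/
noncomputable def hookLens {d : ℕ} (c : Fin d → ℝ) (k : ℝ)
    (S : Fin d → Finset ℕ) : Multiset ℝ :=
  (symbolHooks S).val.map (hookLen c k)

/-- `H_{ij}^ℓ(S)`, the set of hooks `(a,b,i,j)` of `S` with `a − b = ℓ`. -/
def Hij {d : ℕ} (S : Fin d → Finset ℕ) (i j : Fin d) (ℓ : ℕ) :
    Finset (ℕ × ℕ × Fin d × Fin d) :=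
  (symbolHooks S).filter fun z => z.2.2.1 = i ∧ z.2.2.2 = j ∧ z.1 - z.2.1 = ℓ

/-- The sign-modified length `h̄^{δ_S}` (on hooks of the balanced quotient), where
`x` records the cardinalities `x_i = |X_i|` of `S`, and `δ_S = (c_i + x_i k; k)`.
For a hook `z = (a,b,u,v)` with `ℓ = a − b`: relabelling so that `Δ = x_i − x_j ≥ 0`,
the sign is `+` if `z` lies in position `(i,j)`, or in position `(j,i)` with `ℓ > Δ`,
or in position `(j,i)` with `ℓ = Δ` and `i < j`; otherwise the sign is `−`. -/
noncomputable def signedLen {d : ℕ} (x : Fin d → ℕ) (c : Fin d → ℝ) (k : ℝ)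
    (z : ℕ × ℕ × Fin d × Fin d) : ℝ :=
  if x z.2.2.2 ≤ x z.2.2.1 then
    k * ((z.1 - z.2.1 : ℕ) : ℝ) + (c z.2.2.1 + (x z.2.2.1 : ℝ) * k)
      - (c z.2.2.2 + (x z.2.2.2 : ℝ) * k)
  else if x z.2.2.2 - x z.2.2.1 < z.1 - z.2.1 ∨
      (z.1 - z.2.1 = x z.2.2.2 - x z.2.2.1 ∧ (z.2.2.2 : ℕ) < (z.2.2.1 : ℕ)) then
    k * ((z.1 - z.2.1 : ℕ) : ℝ) + (c z.2.2.1 + (x z.2.2.1 : ℝ) * k)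
      - (c z.2.2.2 + (x z.2.2.2 : ℝ) * k)
  else
    -(k * ((z.1 - z.2.1 : ℕ) : ℝ) + (c z.2.2.1 + (x z.2.2.1 : ℝ) * k)
      - (c z.2.2.2 + (x z.2.2.2 : ℝ) * k))

/-- The permutation `σ_{d,ℓ,e}` of `ℕ`:
`σ(r(dℓ) + sd + t) = r(dℓ) + sd + ((t + re) mod d)`. -/
def twistFun (d ℓ e : ℕ) (n : ℕ) : ℕ :=
  d * ℓ * (n / (d * ℓ)) + d * (n % (d * ℓ) / d) + (n % d + n / (d * ℓ) * e) % d

lemma mem_shiftUp {X : Finset ℕ} {s a : ℕ} :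
    a ∈ shiftUp X s ↔ (s ≤ a ∧ a - s ∈ X) ∨ a < s := by
  simp only [shiftUp, Finset.mem_union, Finset.mem_image, Finset.mem_range]
  constructor
  · rintro (⟨w, hw, rfl⟩ | h)
    · exact Or.inl ⟨Nat.le_add_left _ _, by simpa⟩
    · exact Or.inr h
  · rintro (⟨h1, h2⟩ | h)
    · exact Or.inl ⟨a - s, h2, by omega⟩
    · exact Or.inr h

lemma shiftUp_zero (X : Finset ℕ) : shiftUp X 0 = X := by
  ext a; simp [mem_shiftUp]

lemma shiftUp_shiftUp (X : Finset ℕ) (s t : ℕ) :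
    shiftUp (shiftUp X s) t = shiftUp X (s + t) := by
  ext a; simp only [mem_shiftUp]; constructor
  · rintro (⟨h1, (⟨h2, h3⟩|h2)⟩|h)
    · refine Or.inl ⟨by omega, ?_⟩
      have : a - (s + t) = a - t - s := by omega
      rwa [this]
    · omega
    · omega
  · rintro (⟨h1, h2⟩|h)
    · refine Or.inl ⟨by omega, Or.inl ⟨by omega, ?_⟩⟩
      have : a - t - s = a - (s + t) := by omega
      rwa [this]
    · rcases Nat.lt_or_ge a t with h'|h'
      · exact Or.inr h'
      · exact Or.inl ⟨by omega, Or.inr (by omega)⟩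

lemma shiftUp_empty (s : ℕ) : shiftUp ∅ s = Finset.range s := by
  ext a; simp [mem_shiftUp, Finset.mem_range]

lemma shiftUp_range (a s : ℕ) : shiftUp (Finset.range a) s = Finset.range (a + s) := by
  ext b; simp only [mem_shiftUp, Finset.mem_range]; omega

lemma card_shiftUp (X : Finset ℕ) (s : ℕ) : (shiftUp X s).card = X.card + s := by
  rw [shiftUp, Finset.card_union_of_disjoint, Finset.card_image_of_injective _
    (add_left_injective s), Finset.card_range]
  rw [Finset.disjoint_right]
  intro a ha; simp only [Finset.mem_range] at ha
  simp only [Finset.mem_image]; rintro ⟨w, _, rfl⟩; omega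

def hp0 (A B : Finset ℕ) (ℓ : ℕ) : ℕ :=
  (A.filter fun a => ℓ ≤ a ∧ a - ℓ ∉ B).card

def hp (A B : Finset ℕ) (ℓ : ℕ) (τ : Prop) [Decidable τ] : ℕ :=
  (A.filter fun a => ℓ ≤ a ∧ a - ℓ ∉ B ∧ (0 < ℓ ∨ τ)).card

lemma hp_eq (A B : Finset ℕ) (ℓ : ℕ) (τ : Prop) [Decidable τ] :
    hp A B ℓ τ = if 0 < ℓ ∨ τ then hp0 A B ℓ else 0 := by
  split
  · next h => unfold hp hp0; congr 1; apply Finset.filter_congr; intro a _; simp [h]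
  · next h => unfold hp; rw [Finset.card_eq_zero, Finset.filter_eq_empty_iff]
              intro a _; tauto

lemma hp_congr {A B : Finset ℕ} {ℓ : ℕ} {τ σ : Prop} [Decidable τ] [Decidable σ]
    (h : τ ↔ σ) : hp A B ℓ τ = hp A B ℓ σ := by
  simp [hp_eq, h]

lemma hp_zero_of {A B : Finset ℕ} {ℓ : ℕ} {τ : Prop} [Decidable τ]
    (h : ¬(0 < ℓ ∨ τ)) : hp A B ℓ τ = 0 := by simp [hp_eq, h]

-- K0
lemma hp0_shift (A B : Finset ℕ) (s ℓ : ℕ) :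
    hp0 (shiftUp A s) (shiftUp B s) ℓ = hp0 A B ℓ := by
  unfold hp0
  apply Finset.card_nbij' (fun a => a - s) (fun a => a + s)
  · intro a ha
    simp only [Finset.mem_coe, Finset.mem_filter, mem_shiftUp] at ha ⊢
    obtain ⟨h1 | h1, h2, h3⟩ := ha
    · refine ⟨h1.2, by omega, fun hc => h3 (Or.inl ⟨by omega, ?_⟩)⟩
      have : a - ℓ - s = a - s - ℓ := by omega
      rwa [this]
    · exact absurd (Or.inr (by omega : a - ℓ < s)) h3
  · intro a ha
    simp only [Finset.mem_coe, Finset.mem_filter, mem_shiftUp] at ha ⊢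
    obtain ⟨h1, h2, h3⟩ := ha
    refine ⟨Or.inl ⟨by omega, by simpa⟩, by omega, ?_⟩
    rintro (⟨h4, h5⟩ | h4)
    · apply h3
      have : a + s - ℓ - s = a - ℓ := by omega
      rwa [this] at h5
    · omega
  · intro a ha
    simp only [Finset.mem_coe, Finset.mem_filter, mem_shiftUp] at ha ⊢
    obtain ⟨h1 | h1, h2, h3⟩ := ha
    · omega
    · exact absurd (Or.inr (by omega : a - ℓ < s)) h3
  · intro a _; dsimp only; omega

-- K1
lemma hp0_shiftL (U B : Finset ℕ) (Δ t : ℕ) (h : Δ ≤ t) :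
    hp0 (shiftUp U Δ) B t = hp0 U B (t - Δ) := by
  unfold hp0
  apply Finset.card_nbij' (fun a => a - Δ) (fun a => a + Δ)
  · intro a ha
    simp only [Finset.mem_coe, Finset.mem_filter, mem_shiftUp] at ha ⊢
    obtain ⟨h1 | h1, h2, h3⟩ := ha
    · refine ⟨h1.2, by omega, ?_⟩
      have : a - Δ - (t - Δ) = a - t := by omega
      rwa [this]
    · omega
  · intro a ha
    simp only [Finset.mem_coe, Finset.mem_filter, mem_shiftUp] at ha ⊢
    obtain ⟨h1, h2, h3⟩ := ha
    refine ⟨Or.inl ⟨by omega, by simpa⟩, by omega, ?_⟩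
    have : a + Δ - t = a - (t - Δ) := by omega
    rwa [this]
  · intro a ha
    simp only [Finset.mem_coe, Finset.mem_filter, mem_shiftUp] at ha ⊢
    obtain ⟨h1 | h1, h2, h3⟩ := ha <;> omega
  · intro a _; dsimp only; omega

-- K3
lemma hp0_shiftR (A V : Finset ℕ) (Δ t : ℕ) :
    hp0 A (shiftUp V Δ) t = hp0 A V (t + Δ) := by
  unfold hp0; congr 1
  apply Finset.filter_congr
  intro a _
  simp only [mem_shiftUp]
  constructor
  · rintro ⟨h1, h2⟩
    refine ⟨by omega, fun hc => h2 (Or.inl ⟨by omega, ?_⟩)⟩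
    have : a - t - Δ = a - (t + Δ) := by omega
    rwa [this]
  · rintro ⟨h1, h2⟩
    refine ⟨by omega, ?_⟩
    rintro (⟨h3, h4⟩ | h3)
    · apply h2
      have : a - (t + Δ) = a - t - Δ := by omega
      rwa [this]
    · omega

-- K4
lemma hp0_range (Δ t : ℕ) : hp0 (Finset.range Δ) ∅ t = Δ - t := by
  unfold hp0
  have : (Finset.range Δ).filter (fun a => t ≤ a ∧ a - t ∉ (∅ : Finset ℕ)) =
      (Finset.range Δ).filter (fun a => t ≤ a) := by
    apply Finset.filter_congr; intro a _; simp
  rw [this]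
  have : (Finset.range Δ).filter (fun a => t ≤ a) = Finset.Ico t Δ := by
    ext a; simp [Finset.mem_range, Finset.mem_Ico, and_comm]
  rw [this, Nat.card_Ico]

-- K5
lemma hp0_zero_symm (U B : Finset ℕ) (h : U.card = B.card) :
    hp0 U B 0 = hp0 B U 0 := by
  unfold hp0
  have e1 : (U.filter fun a => 0 ≤ a ∧ a - 0 ∉ B) = U \ B := by
    ext a; simp [Finset.mem_sdiff]
  have e2 : (B.filter fun a => 0 ≤ a ∧ a - 0 ∉ U) = B \ U := by
    ext a; simp [Finset.mem_sdiff]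
  rw [e1, e2, Finset.card_sdiff_comm h]

-- K6
lemma hp_range_zero {xu xv : ℕ} (h : xu ≤ xv) (t : ℕ) (τ : Prop) [Decidable τ] :
    hp (Finset.range xu) (Finset.range xv) t τ = 0 := by
  rw [hp, Finset.card_eq_zero, Finset.filter_eq_empty_iff]
  intro a ha
  simp only [Finset.mem_range] at ha ⊢
  rintro ⟨h1, h2, h3⟩
  omega

-- K2
lemma hp0_shiftL_lt (U B : Finset ℕ) (Δ t : ℕ) (ht : t < Δ) (hcard : U.card = B.card) :
    hp0 (shiftUp U Δ) B t = (Δ - t) + hp0 B U (Δ - t) := by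
  set m := Δ - t with hm
  have hdisj : Disjoint (U.image (· + Δ)) (Finset.range Δ) := by
    rw [Finset.disjoint_right]
    intro a ha
    simp only [Finset.mem_range] at ha
    simp only [Finset.mem_image]; rintro ⟨w, _, rfl⟩; omega
  have hsplit : hp0 (shiftUp U Δ) B t =
      ((U.image (· + Δ)).filter fun a => t ≤ a ∧ a - t ∉ B).card +
      ((Finset.range Δ).filter fun a => t ≤ a ∧ a - t ∉ B).card := by
    rw [hp0, shiftUp, Finset.filter_union, Finset.card_union_of_disjoint
      (Finset.disjoint_filter_filter hdisj)]
  have him : ((U.image (· + Δ)).filter fun a => t ≤ a ∧ a - t ∉ B).card =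
      (U.filter fun w => w + m ∉ B).card := by
    apply Finset.card_nbij' (fun a => a - Δ) (fun a => a + Δ)
    · intro a ha
      simp only [Finset.mem_coe, Finset.mem_filter, Finset.mem_image] at ha ⊢
      obtain ⟨⟨w, hw, rfl⟩, h2, h3⟩ := ha
      have : w + Δ - Δ = w := by omega
      rw [this]
      refine ⟨hw, ?_⟩
      have : w + Δ - t = w + m := by omega
      rwa [this] at h3
    · intro a ha
      simp only [Finset.mem_coe, Finset.mem_filter, Finset.mem_image] at ha ⊢
      obtain ⟨h1, h2⟩ := ha
      refine ⟨⟨a, h1, rfl⟩, by omega, ?_⟩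
      have : a + Δ - t = a + m := by omega
      rwa [this]
    · intro a ha
      simp only [Finset.mem_coe, Finset.mem_filter, Finset.mem_image] at ha ⊢
      obtain ⟨⟨w, hw, rfl⟩, _⟩ := ha; omega
    · intro a _; dsimp only; omega
  have hrg : ((Finset.range Δ).filter fun a => t ≤ a ∧ a - t ∉ B).card =
      ((Finset.range m).filter fun a => a ∉ B).card := by
    apply Finset.card_nbij' (fun a => a - t) (fun a => a + t)
    · intro a ha
      simp only [Finset.mem_coe, Finset.mem_filter, Finset.mem_range] at ha ⊢
      obtain ⟨h1, h2, h3⟩ := ha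
      exact ⟨by omega, h3⟩
    · intro a ha
      simp only [Finset.mem_coe, Finset.mem_filter, Finset.mem_range] at ha ⊢
      obtain ⟨h1, h2⟩ := ha
      refine ⟨by omega, by omega, ?_⟩
      have : a + t - t = a := by omega
      rwa [this]
    · intro a ha
      simp only [Finset.mem_coe, Finset.mem_filter, Finset.mem_range] at ha ⊢; omega
    · intro a _; dsimp only; omega
  have hU : (U.filter fun w => w + m ∉ B).card + (U.filter fun w => ¬ (w + m ∉ B)).card
      = U.card := Finset.card_filter_add_card_filter_not _
  have hRm : ((Finset.range m).filter fun a => a ∉ B).card +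
      ((Finset.range m).filter fun a => ¬ (a ∉ B)).card = m := by
    rw [Finset.card_filter_add_card_filter_not, Finset.card_range]
  have hcap : (U.filter fun w => ¬ (w + m ∉ B)).card =
      (B.filter fun b => m ≤ b ∧ b - m ∈ U).card := by
    apply Finset.card_nbij' (fun w => w + m) (fun b => b - m)
    · intro a ha
      simp only [Finset.mem_coe, Finset.mem_filter, not_not] at ha ⊢
      refine ⟨ha.2, by omega, ?_⟩
      have : a + m - m = a := by omega
      rw [this]; exact ha.1
    · intro b hb
      simp only [Finset.mem_coe, Finset.mem_filter, not_not] at hb ⊢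
      refine ⟨hb.2.2, ?_⟩
      have : b - m + m = b := by omega
      rw [this]; exact hb.1
    · intro a _; dsimp only; omega
    · intro b hb
      simp only [Finset.mem_coe, Finset.mem_filter] at hb ⊢; omega
  have hBsplit : (B.filter fun b => m ≤ b).card + (B.filter fun b => ¬ (m ≤ b)).card
      = B.card := Finset.card_filter_add_card_filter_not _
  have hBge : (B.filter fun b => m ≤ b ∧ b - m ∈ U).card +
      (B.filter fun b => m ≤ b ∧ b - m ∉ U).card = (B.filter fun b => m ≤ b).card := by
    have e1 : (B.filter fun b => m ≤ b ∧ b - m ∈ U) =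
        (B.filter fun b => m ≤ b).filter (fun b => b - m ∈ U) := by
      rw [Finset.filter_filter]
    have e2 : (B.filter fun b => m ≤ b ∧ b - m ∉ U) =
        (B.filter fun b => m ≤ b).filter (fun b => ¬ (b - m ∈ U)) := by
      rw [Finset.filter_filter]
    rw [e1, e2, Finset.card_filter_add_card_filter_not]
  have hBlt : (B.filter fun b => ¬ (m ≤ b)).card =
      ((Finset.range m).filter fun a => ¬ (a ∉ B)).card := by
    apply Finset.card_nbij' id id
    · intro a ha
      simp only [Finset.mem_coe, Finset.mem_filter, Finset.mem_range, not_not, id] at ha ⊢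
      exact ⟨by omega, ha.1⟩
    · intro a ha
      simp only [Finset.mem_coe, Finset.mem_filter, Finset.mem_range, not_not, id] at ha ⊢
      exact ⟨ha.2, by omega⟩
    · intro a _; rfl
    · intro a _; rfl
  have hhp : hp0 B U m = (B.filter fun b => m ≤ b ∧ b - m ∉ U).card := rfl
  omega

lemma key (U B : Finset ℕ) (h : U.card = B.card) (Δ t : ℕ) (τ : Prop) [Decidable τ] :
    hp (shiftUp U Δ) B t τ
    = (if Δ ≤ t then hp U B (t - Δ) τ else 0)
    + (if t ≤ Δ ∧ (0 < t ∨ (τ ∧ 0 < Δ)) then hp B U (Δ - t) (¬τ) else 0)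
    + hp (Finset.range Δ) ∅ t τ := by
  by_cases F : 0 < t ∨ τ
  · rw [hp_eq _ _ _ _, if_pos F]
    rcases Nat.lt_or_ge t Δ with hlt | hge
    · -- t < Δ
      rw [hp0_shiftL_lt U B Δ t hlt h]
      rw [if_neg (by omega),
        if_pos ⟨by omega, by rcases F with h|h; exacts [Or.inl h, Or.inr ⟨h, by omega⟩]⟩]
      rw [hp_eq B U, if_pos (Or.inl (by omega)), hp_eq (Finset.range Δ) ∅, if_pos F,
        hp0_range]
      omega
    · -- Δ ≤ t
      rw [hp0_shiftL U B Δ t hge, if_pos hge]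
      have hrg : hp (Finset.range Δ) ∅ t τ = 0 := by
        rw [hp_eq, hp0_range]
        split <;> omega
      rw [hrg]
      rcases Nat.lt_or_ge Δ t with hlt2 | hge2
      · -- Δ < t
        rw [hp_eq U B, if_pos (Or.inl (by omega)), if_neg (by omega)]
        omega
      · -- Δ = t
        have e0 : t - Δ = 0 := by omega
        have e1 : Δ - t = 0 := by omega
        rw [e0]
        by_cases ht0 : 0 < Δ
        · rw [if_pos ⟨by omega, by rcases F with h|h; exacts [Or.inl h, Or.inr ⟨h, ht0⟩]⟩, e1,
            hp_eq U B, hp_eq B U]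
          by_cases hτ : τ
          · rw [if_pos (Or.inr hτ), if_neg (by simp [hτ])]
            omega
          · rw [if_neg (by simp [hτ, Nat.lt_irrefl]), if_pos (Or.inr (by simpa using hτ)),
              hp0_zero_symm U B h]
            omega
        · have hτ : τ := by rcases F with h|h; · omega
                            · exact h
          rw [if_neg (by rintro ⟨-, h|⟨-, h⟩⟩ <;> omega), hp_eq U B, if_pos (Or.inr hτ)]
          omega
  · rw [hp_zero_of F]
    have h1 : hp U B (t - Δ) τ = 0 := by
      apply hp_zero_of; push_neg at F ⊢; exact ⟨by omega, F.2⟩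
    have h3 : hp (Finset.range Δ) ∅ t τ = 0 := hp_zero_of F
    rw [h3]
    have h2 : ¬ (t ≤ Δ ∧ (0 < t ∨ (τ ∧ 0 < Δ))) := by tauto
    rw [if_neg h2]
    split <;> simp [h1]


lemma filter_lt_shiftUp_small (X : Finset ℕ) {s a : ℕ} (h : a ≤ s) :
    (shiftUp X s).filter (· < a) = Finset.range a := by
  ext b
  simp only [Finset.mem_filter, Finset.mem_range, mem_shiftUp]
  constructor
  · rintro ⟨_, hb⟩; exact hb
  · intro hb; exact ⟨Or.inr (by omega), hb⟩

lemma filter_lt_shiftUp_card (X : Finset ℕ) (s w : ℕ) :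
    ((shiftUp X s).filter (· < w + s)).card = s + (X.filter (· < w)).card := by
  have he : (shiftUp X s).filter (· < w + s) =
      (X.filter (· < w)).image (· + s) ∪ Finset.range s := by
    ext b
    simp only [Finset.mem_filter, Finset.mem_union, Finset.mem_image, Finset.mem_range,
      mem_shiftUp]
    constructor
    · rintro ⟨(⟨h1, h2⟩ | h1), hb⟩
      · exact Or.inl ⟨b - s, ⟨h2, by omega⟩, by omega⟩
      · exact Or.inr h1
    · rintro (⟨u, ⟨hu, hu2⟩, rfl⟩ | h1)
      · exact ⟨Or.inl ⟨by omega, by simpa⟩, by omega⟩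
      · exact ⟨Or.inr h1, by omega⟩
  rw [he, Finset.card_union_of_disjoint, Finset.card_image_of_injective _
    (add_left_injective s), Finset.card_range]
  · omega
  · rw [Finset.disjoint_right]
    intro b hb
    simp only [Finset.mem_range] at hb
    simp only [Finset.mem_image]
    rintro ⟨u, _, rfl⟩; omega

lemma partitionOf_shiftUp (X : Finset ℕ) (s : ℕ) :
    partitionOf (shiftUp X s) = partitionOf X := by
  have hdisj : Disjoint (X.image (· + s)) (Finset.range s) := by
    rw [Finset.disjoint_right]
    intro a ha
    simp only [Finset.mem_range] at ha
    simp only [Finset.mem_image]; rintro ⟨w, _, rfl⟩; omega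
  have hval : (shiftUp X s).val = X.val.map (· + s) + (Finset.range s).val := by
    have : shiftUp X s = (X.image (· + s)).disjUnion (Finset.range s) hdisj := by
      rw [Finset.disjUnion_eq_union]; rfl
    rw [this]
    change (X.image (· + s)).val + (Finset.range s).val = _
    congr 1
    rw [Finset.image_val, Multiset.dedup_eq_self.mpr]
    exact X.nodup.map (add_left_injective s)
  unfold partitionOf
  rw [hval, Multiset.map_add, Multiset.filter_add]
  have h2 : Multiset.filter (· ≠ 0)
      ((Finset.range s).val.map fun a => a - ((shiftUp X s).filter (· < a)).card) = 0 := by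
    rw [Multiset.filter_eq_nil]
    intro b hb
    simp only [Multiset.mem_map] at hb
    obtain ⟨a, ha, rfl⟩ := hb
    rw [← Finset.mem_def, Finset.mem_range] at ha
    rw [filter_lt_shiftUp_small X (by omega : a ≤ s), Finset.card_range]
    omega
  rw [h2, add_zero]
  congr 1
  rw [Multiset.map_map]
  apply Multiset.map_congr rfl
  intro w hw
  simp only [Function.comp_apply]
  have hc := filter_lt_shiftUp_card X s w
  unfold shiftUp at hc ⊢
  omega

lemma fval_le_max (X : Finset ℕ) (hX : X.Nonempty) {a : ℕ} (ha : a ∈ X) :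
    a - (X.filter (· < a)).card ≤ X.max' hX - (X.card - 1) := by
  set M := X.max' hX with hM
  have haM : a ≤ M := X.le_max' a ha
  have hsplit : (X.filter (· < a)).card + (X.filter fun b => ¬ b < a).card = X.card :=
    Finset.card_filter_add_card_filter_not _
  have hsub : (X.filter fun b => ¬ b < a) ⊆ Finset.Icc a M := by
    intro b hb
    simp only [Finset.mem_filter] at hb
    simp only [Finset.mem_Icc]
    exact ⟨by omega, X.le_max' b hb.1⟩
  have h2 : (X.filter fun b => ¬ b < a).card ≤ M - a + 1 := by
    have := Finset.card_le_card hsub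
    rw [Nat.card_Icc] at this
    omega
  have hfM : (X.filter (· < M)).card = X.card - 1 := by
    have he : X.filter (· < M) = X.erase M := by
      ext b
      simp only [Finset.mem_filter, Finset.mem_erase]
      constructor
      · rintro ⟨hb, hlt⟩; exact ⟨by omega, hb⟩
      · rintro ⟨hne, hb⟩
        have := X.le_max' b hb
        exact ⟨hb, by omega⟩
    rw [he, Finset.card_erase_of_mem (X.max'_mem hX)]
  have hcard : 0 < X.card := Finset.card_pos.mpr hX
  omega

lemma max_ge_card (X : Finset ℕ) (hX : X.Nonempty) : X.card ≤ X.max' hX + 1 := by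
  have : X ⊆ Finset.range (X.max' hX + 1) := by
    intro b hb
    simp only [Finset.mem_range]
    have := X.le_max' b hb
    omega
  have := Finset.card_le_card this
  rwa [Finset.card_range] at this

lemma partition_zero (X : Finset ℕ) (h : partitionOf X = 0) : X = Finset.range X.card := by
  have hall : ∀ a ∈ X, a - (X.filter (· < a)).card = 0 := by
    intro a ha
    rw [partitionOf, Multiset.filter_eq_nil] at h
    have := h (a - (X.filter (· < a)).card) (Multiset.mem_map.mpr ⟨a, ha, rfl⟩)
    simpa using this
  have hsub : X ⊆ Finset.range X.card := by
    intro a ha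
    simp only [Finset.mem_range]
    have h1 := hall a ha
    have h2 : (X.filter (· < a)).card ≤ (X.erase a).card := by
      apply Finset.card_le_card
      intro b hb
      simp only [Finset.mem_filter] at hb
      simp only [Finset.mem_erase]
      exact ⟨by omega, hb.1⟩
    rw [Finset.card_erase_of_mem ha] at h2
    have hcard : 0 < X.card := Finset.card_pos.mpr ⟨a, ha⟩
    omega
  exact Finset.eq_of_subset_of_card_le hsub (by rw [Finset.card_range])

lemma partition_cons (X : Finset ℕ) (hX : X.Nonempty) :
    partitionOf (X.erase (X.max' hX)) =
      Multiset.filter (· ≠ 0) ((X.erase (X.max' hX)).val.map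
        fun a => a - (X.filter (· < a)).card) := by
  unfold partitionOf
  congr 1
  apply Multiset.map_congr rfl
  intro a ha
  rw [← Finset.mem_def] at ha
  have haX : a ∈ X := Finset.mem_of_mem_erase ha
  have haM : a ≠ X.max' hX := Finset.ne_of_mem_erase ha
  have haM' : a < X.max' hX := lt_of_le_of_ne (X.le_max' a haX) haM
  have : (X.erase (X.max' hX)).filter (· < a) = X.filter (· < a) := by
    ext b
    simp only [Finset.mem_filter, Finset.mem_erase]
    constructor
    · rintro ⟨⟨_, hb⟩, h2⟩; exact ⟨hb, h2⟩
    · rintro ⟨hb, h2⟩; exact ⟨⟨by omega, hb⟩, h2⟩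
  rw [this]

lemma partition_decomp (X : Finset ℕ) (hX : X.Nonempty)
    (hv : X.max' hX - (X.card - 1) ≠ 0) :
    partitionOf X = (X.max' hX - (X.card - 1)) ::ₘ partitionOf (X.erase (X.max' hX)) := by
  set M := X.max' hX with hMdef
  have hMX : M ∈ X := X.max'_mem hX
  have hval : X.val = M ::ₘ (X.erase M).val := by
    rw [Finset.erase_val]
    exact (Multiset.cons_erase (Finset.mem_def.mp hMX)).symm
  have hfM : (X.filter (· < M)).card = X.card - 1 := by
    have he : X.filter (· < M) = X.erase M := by
      ext b
      simp only [Finset.mem_filter, Finset.mem_erase]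
      constructor
      · rintro ⟨hb, hlt⟩; exact ⟨by omega, hb⟩
      · rintro ⟨hne, hb⟩
        have := X.le_max' b hb
        exact ⟨hb, by omega⟩
    rw [he, Finset.card_erase_of_mem hMX]
  rw [partition_cons X hX]
  unfold partitionOf
  rw [hval, Multiset.map_cons, Multiset.filter_cons_of_pos, hfM]
  rw [hfM]
  exact hv

lemma mem_partition_le (X : Finset ℕ) (hX : X.Nonempty) {b : ℕ} (hb : b ∈ partitionOf X) :
    b ≤ X.max' hX - (X.card - 1) := by
  rw [partitionOf, Multiset.mem_filter, Multiset.mem_map] at hb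
  obtain ⟨⟨a, ha, rfl⟩, _⟩ := hb
  exact fval_le_max X hX (Finset.mem_def.mpr ha)

lemma partition_v_ne (X : Finset ℕ) (hX : X.Nonempty) (hne : partitionOf X ≠ 0) :
    X.max' hX - (X.card - 1) ≠ 0 := by
  intro hv
  apply hne
  rw [partitionOf, Multiset.filter_eq_nil]
  intro b hb
  rw [Multiset.mem_map] at hb
  obtain ⟨a, ha, rfl⟩ := hb
  have := fval_le_max X hX (Finset.mem_def.mpr ha)
  simp only [ne_eq, not_not]
  omega

lemma partition_sup (X : Finset ℕ) (hX : X.Nonempty) (hne : partitionOf X ≠ 0) :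
    (partitionOf X).sup + (X.card - 1) = X.max' hX := by
  have hv := partition_v_ne X hX hne
  have hdec := partition_decomp X hX hv
  have hle : (partitionOf (X.erase (X.max' hX))).sup ≤ X.max' hX - (X.card - 1) := by
    apply Multiset.sup_le.mpr
    intro b hb
    have : b ∈ partitionOf X := by rw [hdec]; exact Multiset.mem_cons_of_mem hb
    exact mem_partition_le X hX this
  have hsup : (partitionOf X).sup = X.max' hX - (X.card - 1) := by
    rw [hdec, Multiset.sup_cons]
    exact sup_eq_left.mpr hle
  rw [hsup]
  have := max_ge_card X hX
  omega

lemma beta_unique : ∀ (n : ℕ) (X W : Finset ℕ), X.card = n → W.card = n →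
    partitionOf X = partitionOf W → X = W := by
  intro n
  induction n with
  | zero =>
    intro X W hX hW _
    rw [Finset.card_eq_zero] at hX hW
    rw [hX, hW]
  | succ n ih =>
    intro X W hX hW hP
    by_cases h0 : partitionOf X = 0
    · have h0' : partitionOf W = 0 := by rw [← hP]; exact h0
      rw [partition_zero X h0, partition_zero W h0', hX, hW]
    · have h0' : partitionOf W ≠ 0 := by rw [← hP]; exact h0
      have hXne : X.Nonempty := Finset.card_pos.mp (by omega)
      have hWne : W.Nonempty := Finset.card_pos.mp (by omega)
      have hM : X.max' hXne = W.max' hWne := by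
        rw [← partition_sup X hXne h0, ← partition_sup W hWne h0', hP, hX, hW]
      have hvX := partition_v_ne X hXne h0
      have hvW := partition_v_ne W hWne h0'
      have hdX := partition_decomp X hXne hvX
      have hdW := partition_decomp W hWne hvW
      rw [hdX, hdW, hM, hW, ← hX] at hP
      rw [hX] at hP
      simp only [Nat.add_sub_cancel] at hP
      have hPtail : partitionOf (X.erase (X.max' hXne)) =
          partitionOf (W.erase (W.max' hWne)) := by
        rw [← hM] at hP ⊢
        exact (Multiset.cons_inj_right _).mp hP
      have hcX : (X.erase (X.max' hXne)).card = n := by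
        rw [Finset.card_erase_of_mem (X.max'_mem hXne), hX]
        omega
      have hcW : (W.erase (W.max' hWne)).card = n := by
        rw [Finset.card_erase_of_mem (W.max'_mem hWne), hW]
        omega
      have := ih _ _ hcX hcW hPtail
      have hre : X = insert (X.max' hXne) (X.erase (X.max' hXne)) :=
        (Finset.insert_erase (X.max'_mem hXne)).symm
      rw [hre, this, hM, Finset.insert_erase (W.max'_mem hWne)]


lemma mem_symbolHooks {d : ℕ} {T : Fin d → Finset ℕ} {z : ℕ × ℕ × Fin d × Fin d} :
    z ∈ symbolHooks T ↔ z.1 ∈ T z.2.2.1 ∧ z.2.1 ∉ T z.2.2.2 ∧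
      (z.2.1 < z.1 ∨ (z.1 = z.2.1 ∧ z.2.2.2 < z.2.2.1)) := by
  constructor
  · intro h
    exact (Finset.mem_filter.mp h).2
  · intro h
    rw [symbolHooks, Finset.mem_filter]
    refine ⟨?_, h⟩
    obtain ⟨h1, h2, h3⟩ := h
    have ha : z.1 ≤ Finset.univ.sup fun i => (T i).sup id := by
      calc z.1 = id z.1 := rfl
      _ ≤ (T z.2.2.1).sup id := Finset.le_sup h1
      _ ≤ _ := Finset.le_sup (f := fun i => (T i).sup id) (Finset.mem_univ z.2.2.1)
    simp only [Finset.mem_product, Finset.mem_range, Finset.mem_univ, and_true]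
    constructor
    · omega
    · rcases h3 with h3 | ⟨h3, _⟩ <;> omega
  
lemma hook_le {d : ℕ} {T : Fin d → Finset ℕ} {z : ℕ × ℕ × Fin d × Fin d}
    (h : z ∈ symbolHooks T) : z.2.1 ≤ z.1 := by
  rcases (mem_symbolHooks.mp h).2.2 with h | ⟨h, _⟩ <;> omega

lemma card_hooks {d : ℕ} (T : Fin d → Finset ℕ) (u v : Fin d) (ℓ : ℕ) :
    ((symbolHooks T).filter fun z => z.2.2.1 = u ∧ z.2.2.2 = v ∧ z.1 = z.2.1 + ℓ).card
      = hp (T u) (T v) ℓ (v < u) := by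
  unfold hp
  apply Finset.card_nbij' (fun z => z.1) (fun a => (a, a - ℓ, u, v))
  · intro z hz
    rw [Finset.mem_coe, Finset.mem_filter] at hz ⊢; dsimp only
    obtain ⟨hmem, hu, hv, hab⟩ := hz
    rw [mem_symbolHooks] at hmem
    obtain ⟨h1, h2, h3⟩ := hmem
    rw [hu] at h1
    rw [hv] at h2
    refine ⟨h1, by omega, ?_, ?_⟩
    · have : z.1 - ℓ = z.2.1 := by omega
      rw [this]; exact h2
    · rcases h3 with h3 | ⟨h3, h4⟩
      · left; omega
      · rw [hu, hv] at h4
        right; exact h4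
  · intro a ha
    rw [Finset.mem_coe, Finset.mem_filter] at ha ⊢
    obtain ⟨h1, h2, h3, h4⟩ := ha
    refine ⟨mem_symbolHooks.mpr ⟨h1, h3, ?_⟩, rfl, rfl, ?_⟩
    · dsimp only
      by_cases h0 : 0 < ℓ
      · left; omega
      · right
        refine ⟨by omega, ?_⟩
        rcases h4 with h4 | h4
        · omega
        · exact h4
    · dsimp only
      omega
  · intro z hz
    rw [Finset.mem_coe, Finset.mem_filter] at hz
    obtain ⟨hmem, hu, hv, hab⟩ := hz
    have : z.1 - ℓ = z.2.1 := by omega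
    dsimp only; rw [this, ← hu, ← hv]
  · intro a _; rfl

def invS {d : ℕ} (z : ℕ × ℕ × Fin d × Fin d) : ℤ × Fin d × Fin d :=
  ((z.1 : ℤ) - (z.2.1 : ℤ), z.2.2.1, z.2.2.2)

def invQ {d : ℕ} (x : Fin d → ℕ) (z : ℕ × ℕ × Fin d × Fin d) : ℤ × Fin d × Fin d :=
  if x z.2.2.2 ≤ x z.2.2.1 then
    ((z.1 : ℤ) - (z.2.1 : ℤ) + (x z.2.2.1 : ℤ) - (x z.2.2.2 : ℤ), z.2.2.1, z.2.2.2)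
  else if x z.2.2.2 - x z.2.2.1 < z.1 - z.2.1 ∨
      (z.1 - z.2.1 = x z.2.2.2 - x z.2.2.1 ∧ (z.2.2.2 : ℕ) < (z.2.2.1 : ℕ)) then
    ((z.1 : ℤ) - (z.2.1 : ℤ) - ((x z.2.2.2 - x z.2.2.1 : ℕ) : ℤ), z.2.2.1, z.2.2.2)
  else
    (((x z.2.2.2 - x z.2.2.1 : ℕ) : ℤ) - ((z.1 : ℤ) - (z.2.1 : ℤ)), z.2.2.2, z.2.2.1)

lemma count_invS {d : ℕ} (T : Fin d → Finset ℕ) (t : ℕ) (u v : Fin d) :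
    ((symbolHooks T).filter fun z => invS z = ((t : ℤ), u, v)).card
      = hp (T u) (T v) t (v < u) := by
  rw [← card_hooks]
  congr 1
  apply Finset.filter_congr
  intro z hz
  have hle := hook_le hz
  simp only [invS, Prod.mk.injEq]
  constructor
  · rintro ⟨h1, h2, h3⟩; exact ⟨h2, h3, by omega⟩
  · rintro ⟨h2, h3, h1⟩; exact ⟨by omega, h2, h3⟩

lemma count_invS_neg {d : ℕ} (T : Fin d → Finset ℕ) (i : ℤ × Fin d × Fin d)
    (hi : i.1 < 0) :
    ((symbolHooks T).filter fun z => invS z = i).card = 0 := by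
  rw [Finset.card_eq_zero, Finset.filter_eq_empty_iff]
  intro z hz
  have hle := hook_le hz
  intro h
  rw [← h] at hi
  simp only [invS] at hi
  omega

lemma count_invQ_neg {d : ℕ} (Y : Fin d → Finset ℕ) (x : Fin d → ℕ)
    (i : ℤ × Fin d × Fin d) (hi : i.1 < 0) :
    ((symbolHooks Y).filter fun z => invQ x z = i).card = 0 := by
  rw [Finset.card_eq_zero, Finset.filter_eq_empty_iff]
  intro z hz
  have hle := hook_le hz
  intro h
  rw [← h] at hi
  unfold invQ at hi
  split at hi
  · next hc => simp only at hi; omega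
  · split at hi
    · next hc hc2 => simp only at hi; omega
    · next hc hc2 =>
      simp only at hi
      push_neg at hc2
      omega

lemma count_invQ_piece1 {d : ℕ} (Y : Fin d → Finset ℕ) (x : Fin d → ℕ) (t : ℕ)
    (u v : Fin d) :
    ((symbolHooks Y).filter fun z =>
        invQ x z = ((t : ℤ), u, v) ∧ (z.2.2.1 = u ∧ z.2.2.2 = v)).card
    = (if x v ≤ x u then
        (if x u - x v ≤ t then hp (Y u) (Y v) (t - (x u - x v)) (v < u) else 0)
      else (if 0 < t ∨ v < u then hp (Y u) (Y v) (t + (x v - x u)) (v < u) else 0)) := by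
  by_cases hxx : x v ≤ x u
  · rw [if_pos hxx]
    by_cases hΔt : x u - x v ≤ t
    · rw [if_pos hΔt, ← card_hooks]
      congr 1
      apply Finset.filter_congr
      intro z hz
      have hle := hook_le hz
      constructor
      · rintro ⟨hq, hu, hv⟩
        refine ⟨hu, hv, ?_⟩
        rw [invQ, if_pos (by rw [hu, hv]; exact hxx)] at hq
        simp only [Prod.mk.injEq] at hq
        obtain ⟨h1, -, -⟩ := hq
        rw [hu, hv] at h1
        omega
      · rintro ⟨hu, hv, hab⟩
        refine ⟨?_, hu, hv⟩
        rw [invQ, if_pos (by rw [hu, hv]; exact hxx)]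
        simp only [Prod.mk.injEq]
        exact ⟨by rw [hu, hv]; push_cast; omega, hu, hv⟩
    · rw [if_neg hΔt, Finset.card_eq_zero, Finset.filter_eq_empty_iff]
      intro z hz
      have hle := hook_le hz
      rintro ⟨hq, hu, hv⟩
      rw [invQ, if_pos (by rw [hu, hv]; exact hxx)] at hq
      simp only [Prod.mk.injEq] at hq
      obtain ⟨h1, -, -⟩ := hq
      rw [hu, hv] at h1
      omega
  · rw [if_neg hxx]
    by_cases hF : 0 < t ∨ v < u
    · rw [if_pos hF, ← card_hooks]
      congr 1
      apply Finset.filter_congr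
      intro z hz
      have hle := hook_le hz
      constructor
      · rintro ⟨hq, hu, hv⟩
        refine ⟨hu, hv, ?_⟩
        rw [invQ, if_neg (by rw [hu, hv]; exact hxx)] at hq
        split at hq
        · simp only [Prod.mk.injEq] at hq
          obtain ⟨h1, -, -⟩ := hq
          rw [hu, hv] at h1
          omega
        · simp only [Prod.mk.injEq] at hq
          obtain ⟨-, h2, h3⟩ := hq
          rw [hu] at h3; rw [hv] at h2
          exfalso
          apply hxx
          rw [← h2, ← h3]
      · rintro ⟨hu, hv, hab⟩
        refine ⟨?_, hu, hv⟩
        rw [invQ, if_neg (by rw [hu, hv]; exact hxx)]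
        rw [if_pos]
        · simp only [Prod.mk.injEq]
          refine ⟨by rw [hu, hv]; push_cast; omega, hu, hv⟩
        · rw [hu, hv]
          rcases hF with hF | hF
          · left; omega
          · rcases Nat.lt_or_ge 0 t with h0 | h0
            · left; omega
            · right
              constructor
              · omega
              · exact Fin.lt_def.mp hF
    · rw [if_neg hF, Finset.card_eq_zero, Finset.filter_eq_empty_iff]
      intro z hz
      have hle := hook_le hz
      rintro ⟨hq, hu, hv⟩
      rw [invQ, if_neg (by rw [hu, hv]; exact hxx)] at hq
      split at hq
      · next hc2 =>
        simp only [Prod.mk.injEq] at hq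
        obtain ⟨h1, -, -⟩ := hq
        rw [hu, hv] at h1 hc2
        push_neg at hF
        rcases hc2 with hc2 | ⟨hc2, hc3⟩
        · omega
        · exact absurd (Fin.lt_def.mpr hc3) (not_lt.mpr hF.2)
      · simp only [Prod.mk.injEq] at hq
        obtain ⟨-, h2, h3⟩ := hq
        rw [hu] at h3; rw [hv] at h2
        exact hxx (by rw [← h2, ← h3])

lemma count_invQ_piece2 {d : ℕ} (Y : Fin d → Finset ℕ) (x : Fin d → ℕ) (t : ℕ)
    (u v : Fin d) :
    ((symbolHooks Y).filter fun z =>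
        invQ x z = ((t : ℤ), u, v) ∧ ¬(z.2.2.1 = u ∧ z.2.2.2 = v)).card
    = (if x v < x u ∧ t ≤ x u - x v ∧ (0 < t ∨ v < u) then
        hp (Y v) (Y u) (x u - x v - t) (u < v) else 0) := by
  have key_branch : ∀ z ∈ symbolHooks Y,
      (invQ x z = ((t : ℤ), u, v) ∧ ¬(z.2.2.1 = u ∧ z.2.2.2 = v)) →
      z.2.2.1 = v ∧ z.2.2.2 = u ∧ ¬ (x u ≤ x v) ∧
        ¬(x u - x v < z.1 - z.2.1 ∨
          (z.1 - z.2.1 = x u - x v ∧ (u : ℕ) < (v : ℕ))) ∧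
        ((x u - x v : ℕ) : ℤ) - ((z.1 : ℤ) - (z.2.1 : ℤ)) = (t : ℤ) := by
    intro z hz ⟨hq, hnp⟩
    rw [invQ] at hq
    split at hq
    · simp only [Prod.mk.injEq] at hq
      exact absurd ⟨hq.2.1, hq.2.2⟩ hnp
    · next hc1 =>
      split at hq
      · simp only [Prod.mk.injEq] at hq
        exact absurd ⟨hq.2.1, hq.2.2⟩ hnp
      · next hc2 =>
        simp only [Prod.mk.injEq] at hq
        obtain ⟨h1, h2, h3⟩ := hq
        subst h2; subst h3
        exact ⟨rfl, rfl, hc1, hc2, h1⟩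
  by_cases hcond : x v < x u ∧ t ≤ x u - x v ∧ (0 < t ∨ v < u)
  · rw [if_pos hcond, ← card_hooks]
    congr 1
    apply Finset.filter_congr
    intro z hz
    have hle := hook_le hz
    constructor
    · intro h
      obtain ⟨hu', hv', hc1, hc2, h1⟩ := key_branch z hz h
      refine ⟨hu', hv', ?_⟩
      have hc2a : ¬(x u - x v < z.1 - z.2.1) := fun hh => hc2 (Or.inl hh)
      omega
    · rintro ⟨hu', hv', hab⟩
      have hne : ¬(z.2.2.1 = u ∧ z.2.2.2 = v) := by
        rintro ⟨h1, h2⟩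
        rw [hu'] at h1
        rw [h1] at hcond
        exact absurd hcond.1 (lt_irrefl _)
      refine ⟨?_, hne⟩
      rw [invQ, if_neg (by rw [hu', hv']; omega)]
      rw [if_neg]
      · simp only [Prod.mk.injEq]
        refine ⟨?_, by rw [hv'], by rw [hu']⟩
        rw [hu', hv']
        push_cast
        omega
      · rw [hu', hv']
        rintro (hc | ⟨hc1, hc2⟩)
        · omega
        · rcases hcond.2.2 with h0 | h0
          · omega
          · exact absurd hc2 (not_lt.mpr (le_of_lt (Fin.lt_def.mp h0)))
  · rw [if_neg hcond, Finset.card_eq_zero, Finset.filter_eq_empty_iff]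
    intro z hz h
    obtain ⟨hu', hv', hc1, hc2, h1⟩ := key_branch z hz h
    have hle := hook_le hz
    have hc2a : ¬(x u - x v < z.1 - z.2.1) := fun hh => hc2 (Or.inl hh)
    apply hcond
    refine ⟨by omega, by omega, ?_⟩
    rcases Nat.lt_or_ge 0 t with h0 | h0
    · exact Or.inl h0
    · right
      have hℓ : z.1 - z.2.1 = x u - x v := by omega
      have hnuv : ¬ ((u : ℕ) < (v : ℕ)) := fun hh => hc2 (Or.inr ⟨hℓ, hh⟩)
      rw [Fin.lt_def]
      have hne : (u : ℕ) ≠ (v : ℕ) := by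
        intro hc
        have : x u = x v := by rw [Fin.val_injective hc]
        omega
      omega

lemma count_invQ {d : ℕ} (Y : Fin d → Finset ℕ) (x : Fin d → ℕ) (t : ℕ) (u v : Fin d) :
    ((symbolHooks Y).filter fun z => invQ x z = ((t : ℤ), u, v)).card
    = (if x v ≤ x u then
        (if x u - x v ≤ t then hp (Y u) (Y v) (t - (x u - x v)) (v < u) else 0)
      else (if 0 < t ∨ v < u then hp (Y u) (Y v) (t + (x v - x u)) (v < u) else 0))
    + (if x v < x u ∧ t ≤ x u - x v ∧ (0 < t ∨ v < u) then
        hp (Y v) (Y u) (x u - x v - t) (u < v) else 0) := by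
  have hsplit : (symbolHooks Y).filter (fun z => invQ x z = ((t : ℤ), u, v)) =
      ((symbolHooks Y).filter fun z =>
        invQ x z = ((t : ℤ), u, v) ∧ (z.2.2.1 = u ∧ z.2.2.2 = v)) ∪
      ((symbolHooks Y).filter fun z =>
        invQ x z = ((t : ℤ), u, v) ∧ ¬(z.2.2.1 = u ∧ z.2.2.2 = v)) := by
    rw [← Finset.filter_or]
    apply Finset.filter_congr
    intro z _
    constructor
    · intro h; by_cases hp : z.2.2.1 = u ∧ z.2.2.2 = v
      · exact Or.inl ⟨h, hp⟩
      · exact Or.inr ⟨h, hp⟩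
    · rintro (⟨h, -⟩ | ⟨h, -⟩) <;> exact h
  rw [hsplit, Finset.card_union_of_disjoint, count_invQ_piece1, count_invQ_piece2]
  rw [Finset.disjoint_left]
  intro z hz1 hz2
  rw [Finset.mem_filter] at hz1 hz2
  exact hz2.2.2 hz1.2.2

lemma hp_shift (A B : Finset ℕ) (s ℓ : ℕ) (τ : Prop) [Decidable τ] :
    hp (shiftUp A s) (shiftUp B s) ℓ τ = hp A B ℓ τ := by
  rw [hp_eq, hp_eq, hp0_shift]

lemma main_identity (Yu Yv A B : Finset ℕ) (r xu xv t : ℕ) (τ σ : Prop)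
    [Decidable τ] [Decidable σ] (hστ : xu ≠ xv → (σ ↔ ¬τ))
    (hYu : Yu.card = r) (hYv : Yv.card = r)
    (hA : shiftUp A r = shiftUp Yu xu) (hB : shiftUp B r = shiftUp Yv xv) :
    hp A B t τ
    = ((if xv ≤ xu then (if xu - xv ≤ t then hp Yu Yv (t - (xu - xv)) τ else 0)
        else (if 0 < t ∨ τ then hp Yu Yv (t + (xv - xu)) τ else 0))
      + (if xv < xu ∧ t ≤ xu - xv ∧ (0 < t ∨ τ) then hp Yv Yu (xu - xv - t) σ else 0))
    + hp (Finset.range xu) (Finset.range xv) t τ := by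
  have h0 : hp A B t τ = hp (shiftUp Yu xu) (shiftUp Yv xv) t τ := by
    rw [← hA, ← hB, hp_shift]
  by_cases hxx : xv ≤ xu
  · set Δ := xu - xv with hΔ
    have hstep : shiftUp Yu xu = shiftUp (shiftUp Yu xv) Δ := by
      rw [shiftUp_shiftUp]
      congr 1
      omega
    rw [h0, hstep,
      key (shiftUp Yu xv) (shiftUp Yv xv)
        (by rw [card_shiftUp, card_shiftUp, hYu, hYv]) Δ t τ]
    congr 1
    · congr 1
      · rw [if_pos hxx]
        split
        · rw [hp_shift]
        · rfl
      · by_cases hc : t ≤ Δ ∧ (0 < t ∨ (τ ∧ 0 < Δ))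
        · have hc' : xv < xu ∧ t ≤ xu - xv ∧ (0 < t ∨ τ) := by
            obtain ⟨h1, h2 | ⟨h2, h3⟩⟩ := hc
            · refine ⟨by omega, h1, Or.inl h2⟩
            · exact ⟨by omega, h1, Or.inr h2⟩
          rw [if_pos hc, if_pos hc', hp_shift]
          apply hp_congr
          have : xu ≠ xv := by omega
          rw [hστ this]
        · have hc' : ¬(xv < xu ∧ t ≤ xu - xv ∧ (0 < t ∨ τ)) := by
            intro ⟨h1, h2, h3⟩
            exact hc ⟨h2, by rcases h3 with h3 | h3; exacts [Or.inl h3, Or.inr ⟨h3, by omega⟩]⟩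
          rw [if_neg hc, if_neg hc']
    · have e1 : shiftUp (Finset.range Δ) xv = Finset.range xu := by
        rw [shiftUp_range]
        congr 1
        omega
      have e2 : shiftUp (∅ : Finset ℕ) xv = Finset.range xv := shiftUp_empty xv
      rw [← hp_shift (Finset.range Δ) ∅ xv t τ, e1, e2]
  · rw [h0]
    have hΔ' : 0 < xv - xu := by omega
    have hstep : shiftUp Yv xv = shiftUp (shiftUp Yv xu) (xv - xu) := by
      rw [shiftUp_shiftUp]
      congr 1
      omega
    rw [hstep, if_neg hxx, if_neg (show ¬(xv < xu ∧ t ≤ xu - xv ∧ (0 < t ∨ τ)) from fun hh => absurd hh.1 (by omega)),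
      hp_range_zero (by omega : xu ≤ xv) t τ]
    rw [hp_eq (shiftUp Yu xu), hp0_shiftR, hp0_shift, hp_eq Yu Yv]
    by_cases F : 0 < t ∨ τ
    · simp only [if_pos F, if_pos (Or.inl (by omega : 0 < t + (xv - xu)))]
      omega
    · simp only [if_neg F]




lemma shift_balanced {d : ℕ} {S Y : Fin d → Finset ℕ} (hY : IsBalancedQuotient S Y)
    (i : Fin d) : shiftUp (S i) (quotCard S) = shiftUp (Y i) ((S i).card) := by
  apply beta_unique ((S i).card + quotCard S)
  · rw [card_shiftUp]
  · rw [card_shiftUp, (hY i).1]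
    omega
  · rw [partitionOf_shiftUp, partitionOf_shiftUp, (hY i).2]

lemma class_count {d : ℕ} (S Y : Fin d → Finset ℕ) (hY : IsBalancedQuotient S Y)
    (i : ℤ × Fin d × Fin d) :
    ((symbolHooks S).filter fun z => invS z = i).card
    = ((symbolHooks Y).filter fun z => invQ (fun j => (S j).card) z = i).card
    + ((symbolHooks (coreSymbol S)).filter fun z => invS z = i).card := by
  obtain ⟨t, u, v⟩ := i
  rcases Int.lt_or_le t 0 with ht | ht
  · rw [count_invS_neg _ _ ht, count_invQ_neg _ _ _ ht, count_invS_neg _ _ ht]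
  · obtain ⟨n, rfl⟩ := Int.eq_ofNat_of_zero_le ht
    rw [count_invS, count_invQ, count_invS]
    have hcore : hp (coreSymbol S u) (coreSymbol S v) n (v < u)
        = hp (Finset.range (S u).card) (Finset.range (S v).card) n (v < u) := rfl
    rw [hcore]
    apply main_identity (Y u) (Y v) (S u) (S v) (quotCard S) ((S u).card) ((S v).card)
      n (v < u) (u < v)
    · intro hne
      have huv : u ≠ v := fun hc => hne (by rw [hc])
      have hval : (u : ℕ) ≠ (v : ℕ) := fun hc => huv (Fin.val_injective hc)
      rw [Fin.lt_def, Fin.lt_def]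
      omega
    · exact (hY u).1
    · exact (hY v).1
    · exact shift_balanced hY u
    · exact shift_balanced hY v



noncomputable def lenOf {d : ℕ} (c : Fin d → ℝ) (k : ℝ) (i : ℤ × Fin d × Fin d) : ℝ :=
  k * (i.1 : ℝ) + c i.2.1 - c i.2.2

lemma hookLen_eq {d : ℕ} (c : Fin d → ℝ) (k : ℝ) {T : Fin d → Finset ℕ}
    {z : ℕ × ℕ × Fin d × Fin d} (hz : z ∈ symbolHooks T) :
    hookLen c k z = lenOf c k (invS z) := by
  have hle := hook_le hz
  unfold hookLen lenOf invS
  dsimp only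
  rw [Nat.cast_sub hle]
  push_cast
  ring

lemma signedLen_eq {d : ℕ} (x : Fin d → ℕ) (c : Fin d → ℝ) (k : ℝ)
    {Y : Fin d → Finset ℕ} {z : ℕ × ℕ × Fin d × Fin d} (hz : z ∈ symbolHooks Y) :
    signedLen x c k z = lenOf c k (invQ x z) := by
  have hle := hook_le hz
  unfold signedLen invQ lenOf
  split
  · dsimp only
    rw [Nat.cast_sub hle]
    push_cast
    ring
  · next hc1 =>
    have hxle : x z.2.2.1 ≤ x z.2.2.2 := le_of_not_ge hc1
    split
    · dsimp only
      rw [Nat.cast_sub hle]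
      push_cast [Nat.cast_sub hxle]
      ring
    · dsimp only
      rw [Nat.cast_sub hle]
      push_cast [Nat.cast_sub hxle]
      ring

lemma exists_equiv_sum {α β γ I : Type*} [DecidableEq I]
    (s : Finset α) (t : Finset β) (w : Finset γ)
    (f : α → I) (g : β → I) (h : γ → I)
    (hc : ∀ i, (s.filter fun a => f a = i).card
      = (t.filter fun b => g b = i).card + (w.filter fun c => h c = i).card) :
    ∃ e : {a // a ∈ s} ≃ {b // b ∈ t} ⊕ {c // c ∈ w},
      ∀ a : {a // a ∈ s},
        Sum.elim (fun b : {b // b ∈ t} => g b.1) (fun c : {c // c ∈ w} => h c.1) (e a)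
          = f a.1 := by
  classical
  set G : {b // b ∈ t} ⊕ {c // c ∈ w} → I :=
    Sum.elim (fun b : {b // b ∈ t} => g b.1) (fun c : {c // c ∈ w} => h c.1) with hG
  have e2 : ∀ i : I, {a : {a // a ∈ s} // f a.1 = i} ≃
      {a // a ∈ s.filter fun a => f a = i} := by
    intro i
    exact ⟨fun x => ⟨x.1.1, Finset.mem_filter.mpr ⟨x.1.2, x.2⟩⟩,
      fun y => ⟨⟨y.1, (Finset.mem_filter.mp y.2).1⟩, (Finset.mem_filter.mp y.2).2⟩,
      fun x => rfl, fun y => rfl⟩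
  have d2 : ∀ i : I, {b : {b // b ∈ t} // g b.1 = i} ≃
      {b // b ∈ t.filter fun b => g b = i} := by
    intro i
    exact ⟨fun x => ⟨x.1.1, Finset.mem_filter.mpr ⟨x.1.2, x.2⟩⟩,
      fun y => ⟨⟨y.1, (Finset.mem_filter.mp y.2).1⟩, (Finset.mem_filter.mp y.2).2⟩,
      fun x => rfl, fun y => rfl⟩
  have d3 : ∀ i : I, {c : {c // c ∈ w} // h c.1 = i} ≃
      {c // c ∈ w.filter fun c => h c = i} := by
    intro i
    exact ⟨fun x => ⟨x.1.1, Finset.mem_filter.mpr ⟨x.1.2, x.2⟩⟩,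
      fun y => ⟨⟨y.1, (Finset.mem_filter.mp y.2).1⟩, (Finset.mem_filter.mp y.2).2⟩,
      fun x => rfl, fun y => rfl⟩
  have e5 : ∀ i : I, {x : {b // b ∈ t} ⊕ {c // c ∈ w} // G x = i} ≃
      ({b : {b // b ∈ t} // g b.1 = i} ⊕ {c : {c // c ∈ w} // h c.1 = i}) := by
    intro i
    refine ⟨fun x => ?_, fun y => ?_, ?_, ?_⟩
    · rcases x with ⟨b | c, hx⟩
      · exact Sum.inl ⟨b, hx⟩
      · exact Sum.inr ⟨c, hx⟩
    · rcases y with ⟨b, hb⟩ | ⟨c, hc'⟩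
      · exact ⟨Sum.inl b, hb⟩
      · exact ⟨Sum.inr c, hc'⟩
    · rintro ⟨b | c, hx⟩ <;> rfl
    · rintro (⟨b, hb⟩ | ⟨c, hc'⟩) <;> rfl
  have fib : ∀ i : I, {a : {a // a ∈ s} // f a.1 = i} ≃ {x : {b // b ∈ t} ⊕ {c // c ∈ w} // G x = i} := by
    intro i
    apply Fintype.equivOfCardEq
    rw [Fintype.card_congr (e2 i), Fintype.card_congr (e5 i), Fintype.card_sum,
      Fintype.card_congr (d2 i), Fintype.card_congr (d3 i),
      Fintype.card_coe, Fintype.card_coe, Fintype.card_coe]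
    exact hc i
  refine ⟨(((Equiv.sigmaFiberEquiv (fun a : {a // a ∈ s} => f a.1)).symm).trans
    ((Equiv.sigmaCongrRight fib).trans (Equiv.sigmaFiberEquiv G))), ?_⟩
  intro a
  exact ((fib (f a.1)) ⟨a, rfl⟩).2

/-- There is a bijection `ω` from `H(S)` onto `H(Q) ⊔ H(C)` such that for every
`d`-hook data tuple `δ = (c_0,…,c_{d−1};k)` and every hook `z` of `S`:
if `ω z ∈ H(Q)` then `h^δ(z) = h̄^{δ_S}(ω z)`, and if `ω z ∈ H(C)` then
`h^δ(z) = h^δ(ω z)`. Here `δ_S = (c_0 + x_0 k,…,c_{d−1} + x_{d−1} k; k)`,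
`x_i = |X_i|`. -/
theorem exists_universal_bijection (d : ℕ) (hd : 0 < d) (S Y : Fin d → Finset ℕ)
    (hY : IsBalancedQuotient S Y) :
    ∃ ω : {z // z ∈ symbolHooks S} ≃
        {z // z ∈ symbolHooks Y} ⊕ {z // z ∈ symbolHooks (coreSymbol S)},
      ∀ (c : Fin d → ℝ) (k : ℝ), 0 ≤ k → ∀ z : {z // z ∈ symbolHooks S},
        Sum.elim
          (fun q : {z // z ∈ symbolHooks Y} =>
            hookLen c k z.val = signedLen (fun i => (S i).card) c k q.val)
          (fun r : {z // z ∈ symbolHooks (coreSymbol S)} =>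
            hookLen c k z.val = hookLen c k r.val)
          (ω z) := by
  obtain ⟨e, he⟩ := exists_equiv_sum (symbolHooks S) (symbolHooks Y)
    (symbolHooks (coreSymbol S)) invS (invQ (fun j => (S j).card)) invS
    (class_count S Y hY)
  refine ⟨e, ?_⟩
  intro c k _ z
  have hz := z.2
  rcases hez : e z with q | r
  · have hq := he z
    rw [hez] at hq
    simp only [Sum.elim_inl] at hq ⊢
    rw [hookLen_eq c k hz, signedLen_eq (fun j => (S j).card) c k q.2, hq]
  · have hr := he z
    rw [hez] at hr
    simp only [Sum.elim_inr] at hr ⊢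
    rw [hookLen_eq c k hz, hookLen_eq c k r.2, hr]
end

section
/- Let S = (X_0,…,X_{d−1}) be a d-symbol with balanced quotient Q = Q(S) and core C = C(S), set x_i = |X_i|, let δ = (c_0,…,c_{d−1}; k) be a d-hook data tuple and δ_S = (c_0 + x_0 k, …, c_{d−1} + x_{d−1} k; k). Then there is an equality of multisets 𝓗^δ(S) = 𝓗̄^{δ_S}(Q) ∪ 𝓗^δ(C), where 𝓗̄^{δ_S}(Q) is the multiset of all sign-modified lengths h̄^{δ_S}(z), z ∈ H(Q), and ∪ denotes multiset union (sum). -/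
namespace HookAux

open Finset

/-- The basic hook count between two β-sets. -/
def N (A B : Finset ℕ) (m : ℕ) : ℕ := (A.filter fun u => m ≤ u ∧ u - m ∉ B).card

lemma mem_shiftUp {A : Finset ℕ} {s b : ℕ} :
    b ∈ shiftUp A s ↔ (s ≤ b ∧ b - s ∈ A) ∨ b < s := by
  simp only [shiftUp, Finset.mem_union, Finset.mem_image, Finset.mem_range]
  constructor
  · rintro (⟨a, ha, rfl⟩ | h)
    · exact Or.inl ⟨Nat.le_add_left _ _, by simpa⟩
    · exact Or.inr h
  · rintro (⟨hs, hm⟩ | h)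
    · exact Or.inl ⟨b - s, hm, by omega⟩
    · exact Or.inr h

lemma shiftUp_shiftUp (A : Finset ℕ) (s t : ℕ) :
    shiftUp (shiftUp A s) t = shiftUp A (s + t) := by
  ext b
  simp only [mem_shiftUp]
  constructor
  · rintro (⟨ht, (⟨hs, hm⟩ | h)⟩ | h)
    · exact Or.inl ⟨by omega, by rwa [show b - (s+t) = b - t - s by omega]⟩
    · omega
    · omega
  · rintro (⟨hst, hm⟩ | h)
    · exact Or.inl ⟨by omega, Or.inl ⟨by omega, by rwa [show b - t - s = b - (s+t) by omega]⟩⟩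
    · omega

lemma shiftUp_zero (A : Finset ℕ) : shiftUp A 0 = A := by
  ext b; simp [mem_shiftUp]

lemma disj_shiftUp (A : Finset ℕ) (s : ℕ) :
    Disjoint (A.image (· + s)) (Finset.range s) := by
  rw [Finset.disjoint_left]
  rintro a ha hr
  simp only [Finset.mem_image] at ha
  obtain ⟨b, _, rfl⟩ := ha
  simp only [Finset.mem_range] at hr; omega

lemma card_shiftUp (A : Finset ℕ) (s : ℕ) : (shiftUp A s).card = A.card + s := by
  rw [shiftUp, ← Finset.disjUnion_eq_union _ _ (disj_shiftUp A s), Finset.card_disjUnion,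
    Finset.card_image_of_injective _ (fun a b h => by omega), Finset.card_range]

/-- simultaneous shift invariance -/
lemma N_shift (A B : Finset ℕ) (s m : ℕ) :
    N (shiftUp A s) (shiftUp B s) m = N A B m := by
  unfold N
  rw [show (shiftUp A s).filter (fun u => m ≤ u ∧ u - m ∉ shiftUp B s)
      = (A.filter fun u => m ≤ u ∧ u - m ∉ B).image (· + s) from ?_]
  · exact Finset.card_image_of_injective _ (fun a b h => by omega)
  ext z
  simp only [Finset.mem_filter, Finset.mem_image, mem_shiftUp]
  constructor
  · rintro ⟨(⟨hs, hz⟩ | h), hm, hnot⟩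
    · push_neg at hnot
      obtain ⟨hnot1, hnot2⟩ := hnot
      refine ⟨z - s, ⟨hz, by omega, fun hc => ?_⟩, by omega⟩
      exact hnot1 hnot2 (by rwa [show z - m - s = z - s - m by omega])
    · exfalso
      push_neg at hnot
      omega
  · rintro ⟨a, ⟨ha, hma, hnb⟩, rfl⟩
    refine ⟨Or.inl ⟨by omega, by simpa⟩, by omega, ?_⟩
    push_neg
    constructor
    · intro h1 h2
      exact hnb (by rwa [show a + s - m - s = a - m by omega] at h2)
    · omega

/-- shifting the second set -/
lemma N_shiftB (A B : Finset ℕ) (s m : ℕ) :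
    N A (shiftUp B s) m = N A B (m + s) := by
  unfold N
  congr 1
  apply Finset.filter_congr
  intro u _
  simp only [mem_shiftUp]
  constructor
  · rintro ⟨hm, hnot⟩
    push_neg at hnot
    obtain ⟨h1, h2⟩ := hnot
    refine ⟨by omega, fun hc => ?_⟩
    exact h1 h2 (by rwa [show u - (m+s) = u - m - s by omega] at hc)
  · rintro ⟨hm, hnot⟩
    refine ⟨by omega, ?_⟩
    push_neg
    constructor
    · intro h1 h2
      exact hnot (by rwa [show u - m - s = u - (m+s) by omega] at h2)
    · omega

/-- shifting the first set -/
lemma N_shiftA (A B : Finset ℕ) (s m : ℕ) :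
    N (shiftUp A s) B (m + s) = N A B m := by
  unfold N
  rw [show (shiftUp A s).filter (fun u => m + s ≤ u ∧ u - (m+s) ∉ B)
      = (A.filter fun u => m ≤ u ∧ u - m ∉ B).image (· + s) from ?_]
  · exact Finset.card_image_of_injective _ (fun a b h => by omega)
  ext z
  simp only [Finset.mem_filter, Finset.mem_image, mem_shiftUp]
  constructor
  · rintro ⟨(⟨hs, hz⟩ | h), hm, hnot⟩
    · exact ⟨z - s, ⟨hz, by omega, by rwa [show z - s - m = z - (m+s) by omega]⟩, by omega⟩
    · omega
  · rintro ⟨a, ⟨ha, hma, hnb⟩, rfl⟩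
    exact ⟨Or.inl ⟨by omega, by simpa⟩, by omega,
      by rwa [show a + s - (m+s) = a - m by omega]⟩

end HookAux
namespace HookAux

open Finset

/-- the inclusion–exclusion identity. -/
lemma N_key (A B : Finset ℕ) (m : ℕ) :
    N A B m + (A.filter (· < m)).card + B.card
      = (B.filter fun v => v + m ∉ A).card + A.card := by
  have h1 : (A.filter fun u => m ≤ u).card
      = N A B m + (A.filter fun u => m ≤ u ∧ u - m ∈ B).card := by
    unfold N
    rw [← Finset.card_filter_add_card_filter_not (s := A.filter fun u => m ≤ u)
      (p := fun u => u - m ∉ B), Finset.filter_filter, Finset.filter_filter]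
    congr 2
    · ext u; simp only [Finset.mem_filter, not_not]
  have h2 : (A.filter fun u => m ≤ u).card + (A.filter (· < m)).card = A.card := by
    have h := Finset.card_filter_add_card_filter_not (s := A) (p := fun u => m ≤ u)
    have e : A.filter (fun u => ¬ m ≤ u) = A.filter (· < m) :=
      Finset.filter_congr (fun u _ => by simp [Nat.not_le])
    rw [e] at h; exact h
  have h3 : (A.filter fun u => m ≤ u ∧ u - m ∈ B).card
      = (B.filter fun v => v + m ∈ A).card := by
    apply Finset.card_bij' (i := fun u _ => u - m) (j := fun v _ => v + m)
    · intro u hu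
      simp only [Finset.mem_filter] at hu ⊢
      exact ⟨hu.2.2, by rw [show u - m + m = u by omega]; exact hu.1⟩
    · intro v hv
      simp only [Finset.mem_filter] at hv ⊢
      exact ⟨hv.2, by omega, by simpa using hv.1⟩
    · intro u hu
      simp only [Finset.mem_filter] at hu
      omega
    · intro v hv
      simp
  have h4 : (B.filter fun v => v + m ∈ A).card + (B.filter fun v => v + m ∉ A).card
      = B.card := by
    rw [← Finset.card_filter_add_card_filter_not (s := B) (p := fun v => v + m ∈ A)]
  omega

/-- the symmetric-difference identity at `m = 0`. -/
lemma N_zero_symm (A B : Finset ℕ) : N A B 0 + B.card = N B A 0 + A.card := by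
  have := N_key A B 0
  simp only [Nat.not_lt_zero, Finset.filter_false, Finset.card_empty, add_zero,
    Nat.zero_add] at this
  have h : (B.filter fun v => v ∉ A).card = N B A 0 := by
    unfold N
    congr 1
    apply Finset.filter_congr
    intro v _
    simp
  omega

/-- the boundary identity. -/
lemma N_boundary (A B : Finset ℕ) (Δ ℓ : ℕ) (hc : B.card + Δ = A.card) (hl : ℓ ≤ Δ) :
    N (shiftUp B Δ) A ℓ + ℓ = N A B (Δ - ℓ) := by
  set m := Δ - ℓ with hm
  have E2 : N (shiftUp B Δ) A ℓ
      = (B.filter fun v => v + m ∉ A).card + ((Finset.range m).filter (· ∉ A)).card := by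
    unfold N
    rw [shiftUp, Finset.filter_union,
      Finset.card_union_of_disjoint (Finset.disjoint_filter_filter (disj_shiftUp B Δ))]
    congr 1
    · rw [show (B.image (· + Δ)).filter (fun u => ℓ ≤ u ∧ u - ℓ ∉ A)
          = (B.filter fun v => v + m ∉ A).image (· + Δ) from ?_]
      · exact Finset.card_image_of_injective _ (fun a b h => by omega)
      ext z
      simp only [Finset.mem_filter, Finset.mem_image]
      constructor
      · rintro ⟨⟨v, hv, rfl⟩, h1, h2⟩
        exact ⟨v, ⟨hv, by rwa [show v + m = v + Δ - ℓ by omega]⟩, rfl⟩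
      · rintro ⟨v, ⟨hv, hvm⟩, rfl⟩
        exact ⟨⟨v, hv, rfl⟩, by omega, by rwa [show v + Δ - ℓ = v + m by omega]⟩
    · apply Finset.card_bij' (i := fun u _ => u - ℓ) (j := fun w _ => w + ℓ)
      · intro u hu
        simp only [Finset.mem_filter, Finset.mem_range] at hu ⊢
        exact ⟨by omega, hu.2.2⟩
      · intro w hw
        simp only [Finset.mem_filter, Finset.mem_range] at hw ⊢
        exact ⟨by omega, by omega, by simpa using hw.2⟩
      · intro u hu
        simp only [Finset.mem_filter, Finset.mem_range] at hu
        omega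
      · intro w _
        simp
    
  have E1 := N_key A B m
  have E3 : ((Finset.range m).filter (· ∉ A)).card + ((Finset.range m).filter (· ∈ A)).card
      = m := by
    have h := Finset.card_filter_add_card_filter_not (s := Finset.range m)
      (p := fun u => u ∉ A)
    have e : (Finset.range m).filter (fun u => ¬ u ∉ A)
        = (Finset.range m).filter (fun u => u ∈ A) :=
      Finset.filter_congr (fun u _ => by simp)
    rw [e, Finset.card_range] at h; exact h
  have E4 : (A.filter (· < m)).card = ((Finset.range m).filter (· ∈ A)).card := by
    congr 1
    ext u
    simp only [Finset.mem_filter, Finset.mem_range]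
    tauto
  omega

/-- core counts -/
lemma N_range (p q m : ℕ) : N (Finset.range p) (Finset.range q) m = p - (q + m) := by
  unfold N
  rw [show (Finset.range p).filter (fun u => m ≤ u ∧ u - m ∉ Finset.range q)
      = Finset.Ico (q + m) p from ?_]
  · exact Nat.card_Ico _ _
  ext u
  simp only [Finset.mem_filter, Finset.mem_range, Finset.mem_Ico, Finset.mem_range]
  omega

end HookAux
namespace HookAux

open Finset

/-- the value contributed by `a` to the partition of `A`. -/
def g (A : Finset ℕ) (a : ℕ) : ℕ := a - (A.filter (· < a)).card

lemma partitionOf_eq (A : Finset ℕ) :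
    partitionOf A = Multiset.filter (· ≠ 0) (A.val.map (g A)) := rfl

lemma partitionOf_shiftUp_one (A : Finset ℕ) :
    partitionOf (shiftUp A 1) = partitionOf A := by
  have hval : (shiftUp A 1).val = (A.val.map (· + 1)) + (Finset.range 1).val := by
    rw [shiftUp, ← Finset.disjUnion_eq_union _ _ (disj_shiftUp A 1)]
    show (A.image (· + 1)).val + (Finset.range 1).val = _
    rw [Finset.image_val_of_injOn (fun a _ b _ h => by omega)]
  have hcard : ∀ a ∈ A, ((shiftUp A 1).filter (· < a + 1)).card
      = (A.filter (· < a)).card + 1 := by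
    intro a _
    rw [shiftUp, Finset.filter_union,
      Finset.card_union_of_disjoint (Finset.disjoint_filter_filter (disj_shiftUp A 1))]
    congr 1
    · rw [show (A.image (· + 1)).filter (· < a + 1) = (A.filter (· < a)).image (· + 1) from ?_]
      · exact Finset.card_image_of_injective _ (fun x y h => by omega)
      ext z
      simp only [Finset.mem_filter, Finset.mem_image]
      constructor
      · rintro ⟨⟨b, hb, rfl⟩, h⟩
        exact ⟨b, ⟨hb, by omega⟩, rfl⟩
      · rintro ⟨b, ⟨hb, hba⟩, rfl⟩
        exact ⟨⟨b, hb, rfl⟩, by omega⟩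
  rw [partitionOf_eq, partitionOf_eq, hval, Multiset.map_add, Multiset.filter_add,
    Multiset.map_map]
  have h1 : Multiset.map (g (shiftUp A 1) ∘ (· + 1)) A.val = Multiset.map (g A) A.val := by
    apply Multiset.map_congr rfl
    intro a ha
    simp only [Function.comp_apply, g]
    rw [hcard a ha]
    omega
  have h2 : Multiset.filter (· ≠ 0) ((Finset.range 1).val.map (g (shiftUp A 1))) = 0 := by
    rw [show (Finset.range 1).val = {0} from rfl]
    simp only [Multiset.map_singleton, g]
    simp [Multiset.filter_singleton]
  rw [h1, h2, add_zero]

lemma partitionOf_shiftUp (A : Finset ℕ) (s : ℕ) :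
    partitionOf (shiftUp A s) = partitionOf A := by
  induction s with
  | zero => rw [shiftUp_zero]
  | succ n ih =>
    rw [show shiftUp A (n + 1) = shiftUp (shiftUp A n) 1 from (shiftUp_shiftUp A n 1).symm,
      partitionOf_shiftUp_one, ih]

lemma g_mono {A : Finset ℕ} {a' a : ℕ} (h : a' ≤ a) : g A a' ≤ g A a := by
  unfold g
  have hsub : A.filter (· < a) ⊆ (A.filter (· < a')) ∪ Finset.Ico a' a := by
    intro b hb
    simp only [Finset.mem_filter, Finset.mem_union, Finset.mem_Ico] at *
    by_cases hb' : b < a'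
    · exact Or.inl ⟨hb.1, hb'⟩
    · exact Or.inr ⟨by omega, hb.2⟩
  have := (Finset.card_le_card hsub).trans (Finset.card_union_le _ _)
  rw [Nat.card_Ico] at this
  omega

lemma partitionOf_eq_zero {A : Finset ℕ} (h : partitionOf A = 0) :
    A = Finset.range A.card := by
  have hall : ∀ a ∈ A, g A a = 0 := by
    intro a ha
    by_contra hne
    have : g A a ∈ partitionOf A := by
      rw [partitionOf_eq]
      rw [Multiset.mem_filter]
      exact ⟨Multiset.mem_map_of_mem _ ha, hne⟩
    rw [h] at this
    exact absurd this (Multiset.notMem_zero _)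
  apply Finset.eq_of_subset_of_card_le ?_ (by rw [Finset.card_range])
  intro a ha
  rw [Finset.mem_range]
  have h1 := hall a ha
  have h2 : (A.filter (· < a)).card ≤ (A.erase a).card := by
    apply Finset.card_le_card
    intro b hb
    simp only [Finset.mem_filter] at hb
    exact Finset.mem_erase.mpr ⟨by omega, hb.1⟩
  rw [Finset.card_erase_of_mem ha] at h2
  have h3 : 0 < A.card := Finset.card_pos.mpr ⟨a, ha⟩
  unfold g at h1
  omega

lemma filter_lt_max {A : Finset ℕ} (h : A.Nonempty) :
    A.filter (· < A.max' h) = A.erase (A.max' h) := by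
  ext b
  simp only [Finset.mem_filter, Finset.mem_erase]
  constructor
  · rintro ⟨hb, hlt⟩
    exact ⟨by omega, hb⟩
  · rintro ⟨hne, hb⟩
    exact ⟨hb, lt_of_le_of_ne (Finset.le_max' A b hb) hne⟩

lemma g_erase_max {A : Finset ℕ} (h : A.Nonempty) {b : ℕ} (hb : b ∈ A.erase (A.max' h)) :
    g (A.erase (A.max' h)) b = g A b := by
  unfold g
  congr 2
  ext x
  simp only [Finset.mem_filter, Finset.mem_erase]
  have hble : b ≤ A.max' h := Finset.le_max' A b (Finset.mem_of_mem_erase hb)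
  constructor
  · rintro ⟨⟨_, hx⟩, hlt⟩
    exact ⟨hx, hlt⟩
  · rintro ⟨hx, hlt⟩
    exact ⟨⟨by omega, hx⟩, hlt⟩

lemma partitionOf_erase_max {A : Finset ℕ} (h : A.Nonempty)
    (hg : g A (A.max' h) ≠ 0) :
    partitionOf (A.erase (A.max' h)) = (partitionOf A).erase (g A (A.max' h)) := by
  set a := A.max' h with ha
  have hmem : a ∈ A := A.max'_mem h
  have hval : A.val = a ::ₘ (A.erase a).val := by
    rw [Finset.erase_val]
    exact (Multiset.cons_erase (by exact hmem)).symm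
  have h1 : (A.erase a).val.map (g (A.erase a)) = (A.erase a).val.map (g A) :=
    Multiset.map_congr rfl (fun b hb => g_erase_max h hb)
  rw [partitionOf_eq, partitionOf_eq, h1]
  have h2 : A.val.map (g A) = g A a ::ₘ (A.erase a).val.map (g A) := by
    rw [hval, Multiset.map_cons]
  rw [h2, Multiset.filter_cons_of_pos (p := fun x => x ≠ 0) _ hg, Multiset.erase_cons_head]

lemma mem_partitionOf_le_max {A : Finset ℕ} (h : A.Nonempty) {μ : ℕ}
    (hμ : μ ∈ partitionOf A) : μ ≤ g A (A.max' h) := by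
  rw [partitionOf_eq, Multiset.mem_filter, Multiset.mem_map] at hμ
  obtain ⟨⟨b, hb, rfl⟩, _⟩ := hμ
  exact g_mono (Finset.le_max' A b hb)

lemma max_mem_partitionOf {A : Finset ℕ} (h : A.Nonempty) (hg : g A (A.max' h) ≠ 0) :
    g A (A.max' h) ∈ partitionOf A := by
  rw [partitionOf_eq, Multiset.mem_filter]
  exact ⟨Multiset.mem_map_of_mem _ (A.max'_mem h), hg⟩

lemma g_max_ne_zero {A : Finset ℕ} (h : A.Nonempty) (hz : partitionOf A ≠ 0) :
    g A (A.max' h) ≠ 0 := by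
  intro h0
  apply hz
  rw [partitionOf_eq, Multiset.filter_eq_nil]
  intro μ hμ
  rw [Multiset.mem_map] at hμ
  obtain ⟨x, hx, rfl⟩ := hμ
  have := g_mono (A := A) (Finset.le_max' A x hx)
  simp only [not_not]
  omega

/-- A β-set is determined by its partition and its cardinality. -/
lemma partition_card_unique : ∀ (n : ℕ) (A B : Finset ℕ), A.card = n → B.card = n →
    partitionOf A = partitionOf B → A = B := by
  intro n
  induction n with
  | zero =>
    intro A B hA hB _
    rw [Finset.card_eq_zero] at hA hB
    rw [hA, hB]
  | succ n ih =>
    intro A B hA hB hp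
    by_cases hz : partitionOf A = 0
    · have e1 := partitionOf_eq_zero hz
      have e2 := partitionOf_eq_zero (show partitionOf B = 0 by rw [← hp]; exact hz)
      rw [hA] at e1
      rw [hB] at e2
      rw [e1, e2]
    · have hAne : A.Nonempty := Finset.card_pos.mp (by omega)
      have hBne : B.Nonempty := Finset.card_pos.mp (by omega)
      set a := A.max' hAne with hadef
      set b := B.max' hBne with hbdef
      have hga : g A a ≠ 0 := g_max_ne_zero hAne hz
      have hgb : g B b ≠ 0 := g_max_ne_zero hBne (by rw [← hp]; exact hz)
      have hgeq : g A a = g B b := by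
        have m1 : g A a ∈ partitionOf B := hp ▸ max_mem_partitionOf hAne hga
        have m2 : g B b ∈ partitionOf A := hp.symm ▸ max_mem_partitionOf hBne hgb
        exact le_antisymm (mem_partitionOf_le_max hBne m1) (mem_partitionOf_le_max hAne m2)
      have hcardA : (A.filter (· < a)).card = n := by
        rw [filter_lt_max hAne, Finset.card_erase_of_mem (A.max'_mem hAne), hA]
        omega
      have hcardB : (B.filter (· < b)).card = n := by
        rw [filter_lt_max hBne, Finset.card_erase_of_mem (B.max'_mem hBne), hB]
        omega
      have hna : n ≤ a := by
        have hsub : A.filter (· < a) ⊆ Finset.range a := by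
          intro x hx
          simp only [Finset.mem_filter, Finset.mem_range] at *
          exact hx.2
        have := Finset.card_le_card hsub
        rw [hcardA, Finset.card_range] at this
        exact this
      have hnb : n ≤ b := by
        have hsub : B.filter (· < b) ⊆ Finset.range b := by
          intro x hx
          simp only [Finset.mem_filter, Finset.mem_range] at *
          exact hx.2
        have := Finset.card_le_card hsub
        rw [hcardB, Finset.card_range] at this
        exact this
      have hab : a = b := by
        have e1 : g A a = a - n := by rw [g, hcardA]
        have e2 : g B b = b - n := by rw [g, hcardB]
        omega
      have herase : A.erase a = B.erase b := by
        apply ih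
        · rw [Finset.card_erase_of_mem (A.max'_mem hAne), hA]
          omega
        · rw [Finset.card_erase_of_mem (B.max'_mem hBne), hB]
          omega
        · rw [partitionOf_erase_max hAne hga, partitionOf_erase_max hBne hgb, hp, hgeq]
      calc A = insert a (A.erase a) := (Finset.insert_erase (A.max'_mem hAne)).symm
        _ = B := by rw [herase, hab]; exact Finset.insert_erase (B.max'_mem hBne)

end HookAux
namespace HookAux

open Finset

variable {d : ℕ}

/-- the index triple of a hook: position and arm difference. -/
def idx (z : ℕ × ℕ × Fin d × Fin d) : Fin d × Fin d × ℕ := (z.2.2.1, z.2.2.2, z.1 - z.2.1)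

/-- the length of an index triple. -/
noncomputable def tval (c : Fin d → ℝ) (k : ℝ) (t : Fin d × Fin d × ℕ) : ℝ :=
  k * (t.2.2 : ℝ) + c t.1 - c t.2.1

/-- the relabelling map on index triples. -/
def T (x : Fin d → ℕ) (t : Fin d × Fin d × ℕ) : Fin d × Fin d × ℕ :=
  if x t.2.1 ≤ x t.1 then (t.1, t.2.1, t.2.2 + (x t.1 - x t.2.1))
  else if x t.2.1 - x t.1 < t.2.2 ∨ (t.2.2 = x t.2.1 - x t.1 ∧ (t.2.1 : ℕ) < (t.1 : ℕ)) then
    (t.1, t.2.1, t.2.2 - (x t.2.1 - x t.1))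
  else (t.2.1, t.1, (x t.2.1 - x t.1) - t.2.2)

lemma hookLen_eq_tval (c : Fin d → ℝ) (k : ℝ) (z : ℕ × ℕ × Fin d × Fin d) :
    hookLen c k z = tval c k (idx z) := rfl

lemma signedLen_eq_tval (x : Fin d → ℕ) (c : Fin d → ℝ) (k : ℝ) (z : ℕ × ℕ × Fin d × Fin d) :
    signedLen x c k z = tval c k (T x (idx z)) := by
  rcases z with ⟨a, b, u, v⟩
  show signedLen x c k (a, b, u, v) = tval c k (T x (u, v, a - b))
  simp only [signedLen, T, idx, tval]
  by_cases h1 : x v ≤ x u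
  · rw [if_pos h1, if_pos h1]
    have e : ((a - b + (x u - x v) : ℕ) : ℝ) = ((a - b : ℕ) : ℝ) + (x u : ℝ) - (x v : ℝ) := by
      rw [Nat.cast_add, Nat.cast_sub h1]
      ring
    rw [e]; ring
  · rw [if_neg h1, if_neg h1]
    by_cases h2 : x v - x u < a - b ∨ (a - b = x v - x u ∧ (v : ℕ) < (u : ℕ))
    · rw [if_pos h2, if_pos h2]
      have hle : x v - x u ≤ a - b := by rcases h2 with h | h <;> omega
      have e : ((a - b - (x v - x u) : ℕ) : ℝ)
          = ((a - b : ℕ) : ℝ) - (x v : ℝ) + (x u : ℝ) := by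
        rw [Nat.cast_sub hle, Nat.cast_sub (show x u ≤ x v by omega)]
        ring
      rw [e]; ring
    · rw [if_neg h2, if_neg h2]
      have hle : a - b ≤ x v - x u := by omega
      have e : ((x v - x u - (a - b) : ℕ) : ℝ)
          = (x v : ℝ) - (x u : ℝ) - ((a - b : ℕ) : ℝ) := by
        rw [Nat.cast_sub hle, Nat.cast_sub (show x u ≤ x v by omega)]
      rw [e]; ring

lemma mem_symbolHooks {W : Fin d → Finset ℕ} {z : ℕ × ℕ × Fin d × Fin d} :
    z ∈ symbolHooks W ↔ z.1 ∈ W z.2.2.1 ∧ z.2.1 ∉ W z.2.2.2 ∧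
      (z.2.1 < z.1 ∨ (z.1 = z.2.1 ∧ z.2.2.2 < z.2.2.1)) := by
  unfold symbolHooks
  rw [Finset.mem_filter]
  simp only [Finset.mem_product, Finset.mem_range, Finset.mem_univ, and_true]
  constructor
  · tauto
  · intro h
    refine ⟨⟨?_, ?_⟩, h⟩
    · have h1 : id z.1 ≤ (W z.2.2.1).sup id := Finset.le_sup h.1
      have h2 : (W z.2.2.1).sup id ≤ Finset.univ.sup fun i => (W i).sup id :=
        Finset.le_sup (f := fun i => (W i).sup id) (Finset.mem_univ _)
      simp only [id] at h1
      omega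
    · have h1 : id z.1 ≤ (W z.2.2.1).sup id := Finset.le_sup h.1
      have h2 : (W z.2.2.1).sup id ≤ Finset.univ.sup fun i => (W i).sup id :=
        Finset.le_sup (f := fun i => (W i).sup id) (Finset.mem_univ _)
      simp only [id] at h1
      have h3 : z.2.1 ≤ z.1 := by
        rcases h.2.2 with h' | h'
        · omega
        · omega
      omega

/-- the count of hooks of `W` in position `(i,j)` with arm difference `m`. -/
lemma count_idx (W : Fin d → Finset ℕ) (i j : Fin d) (m : ℕ) :
    Multiset.count (i, j, m) ((symbolHooks W).val.map idx)
      = if 0 < m ∨ j < i then N (W i) (W j) m else 0 := by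
  rw [Multiset.count_map]
  rw [show Multiset.filter (fun z => (i, j, m) = idx z) (symbolHooks W).val
      = ((symbolHooks W).filter (fun z => (i, j, m) = idx z)).val from rfl]
  rw [show Multiset.card ((symbolHooks W).filter (fun z => (i, j, m) = idx z)).val
      = ((symbolHooks W).filter (fun z => (i, j, m) = idx z)).card from rfl]
  split_ifs with h
  · rw [show (symbolHooks W).filter (fun z => (i, j, m) = idx z)
        = ((W i).filter fun a => m ≤ a ∧ a - m ∉ W j).image (fun a => (a, a - m, i, j))
        from ?_]
    · exact Finset.card_image_of_injective _
        (fun a b hab => by simpa using congrArg Prod.fst hab)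
    ext z
    rcases z with ⟨a, b, u, v⟩
    simp only [Finset.mem_filter, Finset.mem_image, mem_symbolHooks, idx, Prod.mk.injEq]
    constructor
    · rintro ⟨⟨ha, hb, hcond⟩, rfl, rfl, hm⟩
      rcases hcond with hlt | ⟨heq, hlt⟩
      · refine ⟨a, ⟨ha, by omega, ?_⟩, rfl, by omega, rfl, rfl⟩
        have e : a - m = b := by omega
        rwa [e]
      · subst heq
        refine ⟨a, ⟨ha, by omega, ?_⟩, rfl, by omega, rfl, rfl⟩
        have e : a - m = a := by omega
        rwa [e]
    · rintro ⟨a', ⟨ha, hma, hnb⟩, rfl, rfl, rfl, rfl⟩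
      refine ⟨⟨ha, hnb, ?_⟩, rfl, rfl, by omega⟩
      rcases h with hm | hij
      · exact Or.inl (by omega)
      · by_cases hm : 0 < m
        · exact Or.inl (by omega)
        · exact Or.inr ⟨by omega, hij⟩
  · rw [Finset.card_eq_zero]
    rw [Finset.eq_empty_iff_forall_notMem]
    rintro ⟨a, b, u, v⟩ hz
    simp only [Finset.mem_filter, mem_symbolHooks, idx, Prod.mk.injEq] at hz
    obtain ⟨⟨ha, hb, hcond⟩, rfl, rfl, hm⟩ := hz
    push_neg at h
    rcases hcond with hlt | ⟨heq, hlt⟩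
    · omega
    · exact absurd hlt (not_lt.mpr h.2)

lemma count_map_fiber_single {α β : Type*} [DecidableEq α] [DecidableEq β]
    (f : α → β) (s : Multiset α) (t : β) (t₁ : α) (h : ∀ a, f a = t ↔ a = t₁) :
    Multiset.count t (s.map f) = Multiset.count t₁ s := by
  rw [Multiset.count_map]
  rw [Multiset.filter_congr (fun a _ => by rw [eq_comm, h a])]
  rw [Multiset.filter_eq', Multiset.card_replicate]

lemma count_map_fiber_pair {α β : Type*} [DecidableEq α] [DecidableEq β]
    (f : α → β) (s : Multiset α) (t : β) (t₁ t₂ : α) (hne : t₁ ≠ t₂)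
    (h : ∀ a, f a = t ↔ a = t₁ ∨ a = t₂) :
    Multiset.count t (s.map f) = Multiset.count t₁ s + Multiset.count t₂ s := by
  rw [Multiset.count_map]
  rw [Multiset.filter_congr (fun a _ => by rw [eq_comm, h a])]
  have key := Multiset.filter_add_filter (fun a => a = t₁) (fun a => a = t₂) s
  have h0 : Multiset.filter (fun a => a = t₁ ∧ a = t₂) s = 0 := by
    rw [Multiset.filter_eq_nil]
    rintro a ha ⟨rfl, rfl⟩
    exact hne rfl
  rw [h0, add_zero] at key
  rw [← key, Multiset.card_add, Multiset.filter_eq', Multiset.filter_eq',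
    Multiset.card_replicate, Multiset.card_replicate]

lemma count_map_fiber_empty {α β : Type*} [DecidableEq α] [DecidableEq β]
    (f : α → β) (s : Multiset α) (t : β) (h : ∀ a, f a ≠ t) :
    Multiset.count t (s.map f) = 0 := by
  rw [Multiset.count_map]
  rw [show Multiset.filter (fun a => t = f a) s = 0 from ?_]
  · rfl
  rw [Multiset.filter_eq_nil]
  intro a _ ha
  exact h a ha.symm

/-- transfer to the quotient, aligned case -/
lemma NY1 {S Y : Fin d → Finset ℕ} (hY : IsBalancedQuotient S Y) {u v : Fin d}
    (h : (S v).card ≤ (S u).card) (ℓ : ℕ) :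
    N (Y u) (Y v) ℓ = N (S u) (S v) (ℓ + ((S u).card - (S v).card)) := by
  have hsb : ∀ w, shiftUp (Y w) ((S w).card) = shiftUp (S w) (quotCard S) := by
    intro w
    apply partition_card_unique (quotCard S + (S w).card)
    · rw [card_shiftUp, (hY w).1]
    · rw [card_shiftUp]; omega
    · rw [partitionOf_shiftUp, partitionOf_shiftUp]; exact (hY w).2
  set xu := (S u).card
  set xv := (S v).card
  set r := quotCard S
  rw [← N_shift (Y u) (Y v) (xu + xv) ℓ]
  have e1 : shiftUp (Y u) (xu + xv) = shiftUp (S u) (r + xv) := by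
    rw [← shiftUp_shiftUp (Y u) xu xv, hsb u, shiftUp_shiftUp]
  have e2 : shiftUp (Y v) (xu + xv) = shiftUp (shiftUp (S v) (xu - xv)) (r + xv) := by
    rw [show xu + xv = xv + xu from by omega, ← shiftUp_shiftUp (Y v) xv xu, hsb v,
      shiftUp_shiftUp, shiftUp_shiftUp]
    congr 1
    omega
  rw [e1, e2, N_shift (S u) (shiftUp (S v) (xu - xv)) (r + xv) ℓ, N_shiftB]

/-- transfer to the quotient, crossed case -/
lemma NY2 {S Y : Fin d → Finset ℕ} (hY : IsBalancedQuotient S Y) {u v : Fin d}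
    (h : (S v).card ≤ (S u).card) (ℓ : ℕ) :
    N (Y v) (Y u) ℓ = N (shiftUp (S v) ((S u).card - (S v).card)) (S u) ℓ := by
  have hsb : ∀ w, shiftUp (Y w) ((S w).card) = shiftUp (S w) (quotCard S) := by
    intro w
    apply partition_card_unique (quotCard S + (S w).card)
    · rw [card_shiftUp, (hY w).1]
    · rw [card_shiftUp]; omega
    · rw [partitionOf_shiftUp, partitionOf_shiftUp]; exact (hY w).2
  set xu := (S u).card
  set xv := (S v).card
  set r := quotCard S
  rw [← N_shift (Y v) (Y u) (xu + xv) ℓ]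
  have e1 : shiftUp (Y u) (xu + xv) = shiftUp (S u) (r + xv) := by
    rw [← shiftUp_shiftUp (Y u) xu xv, hsb u, shiftUp_shiftUp]
  have e2 : shiftUp (Y v) (xu + xv) = shiftUp (shiftUp (S v) (xu - xv)) (r + xv) := by
    rw [show xu + xv = xv + xu from by omega, ← shiftUp_shiftUp (Y v) xv xu, hsb v,
      shiftUp_shiftUp, shiftUp_shiftUp]
    congr 1
    omega
  rw [e1, e2, N_shift (shiftUp (S v) (xu - xv)) (S u) (r + xv) ℓ]

end HookAux
namespace HookAux

open Finset

variable {d : ℕ}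

lemma main_multiset (S Y : Fin d → Finset ℕ) (hY : IsBalancedQuotient S Y) :
    (symbolHooks S).val.map idx
      = ((symbolHooks Y).val.map idx).map (T fun w => (S w).card)
        + (symbolHooks (coreSymbol S)).val.map idx := by
  apply Multiset.ext.mpr
  rintro ⟨i, j, m⟩
  rw [Multiset.count_add, count_idx S i j m]
  have hcore : Multiset.count (i, j, m) ((symbolHooks (coreSymbol S)).val.map idx)
      = if 0 < m ∨ j < i then (S i).card - ((S j).card + m) else 0 := by
    rw [count_idx (coreSymbol S) i j m]
    simp only [coreSymbol]
    rw [N_range]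
  rw [hcore]
  have hfinlt : ∀ u v : Fin d, u < v ↔ (u : ℕ) < (v : ℕ) := fun u v => Fin.lt_def
  by_cases hij : i = j
  · -- diagonal case
    subst hij
    have hf : ∀ t, T (fun w => (S w).card) t = (i, i, m) ↔ t = (i, i, m) := by
      rintro ⟨u, v, ℓ⟩
      unfold T
      dsimp only
      split_ifs with h1 h2 <;> simp only [Prod.mk.injEq] <;> constructor
      · rintro ⟨rfl, rfl, hE⟩; exact ⟨rfl, rfl, by omega⟩
      · rintro ⟨rfl, rfl, rfl⟩; exact ⟨rfl, rfl, by omega⟩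
      · rintro ⟨rfl, rfl, hE⟩; exact absurd le_rfl h1
      · rintro ⟨rfl, rfl, rfl⟩; exact absurd le_rfl h1
      · rintro ⟨rfl, rfl, hE⟩; exact absurd le_rfl h1
      · rintro ⟨rfl, rfl, rfl⟩; exact absurd le_rfl h1
    rw [count_map_fiber_single _ _ _ _ hf, count_idx Y i i m]
    have hN : N (Y i) (Y i) m = N (S i) (S i) m := by
      have h := NY1 hY (le_refl (S i).card) m
      rw [h]
      congr 1
      omega
    simp only [hfinlt]
    split_ifs <;> omega
  · -- off-diagonal
    have hij' : (i : ℕ) ≠ (j : ℕ) := fun h => hij (Fin.ext h)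
    by_cases hx1 : (S j).card ≤ (S i).card
    · by_cases hΔ0 : (S i).card = (S j).card
      · -- equal cardinalities
        have hf : ∀ t, T (fun w => (S w).card) t = (i, j, m) ↔ t = (i, j, m) := by
          rintro ⟨u, v, ℓ⟩
          unfold T
          dsimp only
          split_ifs with h1 h2 <;> simp only [Prod.mk.injEq] <;> constructor
          · rintro ⟨rfl, rfl, hE⟩; exact ⟨rfl, rfl, by omega⟩
          · rintro ⟨rfl, rfl, rfl⟩; exact ⟨rfl, rfl, by omega⟩
          · rintro ⟨rfl, rfl, hE⟩; exact absurd hx1 h1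
          · rintro ⟨rfl, rfl, rfl⟩; exact absurd hx1 h1
          · rintro ⟨rfl, rfl, hE⟩; exact absurd (show (S v).card ≤ (S u).card by omega) h1
          · rintro ⟨rfl, rfl, rfl⟩; exact absurd hx1 h1
        rw [count_map_fiber_single _ _ _ _ hf, count_idx Y i j m]
        have hN : N (Y i) (Y j) m = N (S i) (S j) m := by
          rw [NY1 hY hx1 m]
          congr 1
          omega
        simp only [hfinlt]
        split_ifs <;> omega
      · -- (S j).card < (S i).card
        have hΔpos : (S j).card < (S i).card := by omega
        have F2 : ∀ ℓ, ℓ ≤ (S i).card - (S j).card →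
            N (Y j) (Y i) ℓ + ℓ = N (S i) (S j) ((S i).card - (S j).card - ℓ) := by
          intro ℓ hℓ
          rw [NY2 hY hx1 ℓ]
          exact N_boundary (S i) (S j) ((S i).card - (S j).card) ℓ (by omega) hℓ
        by_cases hm1 : (S i).card - (S j).card < m
        · -- m > Δ : single fiber (i,j,m-Δ)
          have hf : ∀ t, T (fun w => (S w).card) t = (i, j, m) ↔ t = (i, j, m - ((S i).card - (S j).card)) := by
            rintro ⟨u, v, ℓ⟩
            unfold T
            dsimp only
            split_ifs with h1 h2 <;> simp only [Prod.mk.injEq] <;> constructor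
            · rintro ⟨rfl, rfl, hE⟩; exact ⟨rfl, rfl, by omega⟩
            · rintro ⟨rfl, rfl, rfl⟩; exact ⟨rfl, rfl, by omega⟩
            · rintro ⟨rfl, rfl, hE⟩; exact absurd hx1 h1
            · rintro ⟨rfl, rfl, rfl⟩; exact absurd hx1 h1
            · rintro ⟨rfl, rfl, hE⟩
              exfalso
              push_neg at h2
              omega
            · rintro ⟨rfl, rfl, rfl⟩; exact absurd hx1 h1
          rw [count_map_fiber_single _ _ _ _ hf, count_idx Y i j (m - ((S i).card - (S j).card))]
          have hN : N (Y i) (Y j) (m - ((S i).card - (S j).card)) = N (S i) (S j) m := by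
            rw [NY1 hY hx1 _]
            congr 1
            omega
          simp only [hfinlt]
          split_ifs <;> omega
        · by_cases hm2 : m = (S i).card - (S j).card
          · -- m = Δ : pair fiber (i,j,0) and (j,i,0)
            have hf : ∀ t, T (fun w => (S w).card) t = (i, j, m) ↔ t = (i, j, 0) ∨ t = (j, i, 0) := by
              rintro ⟨u, v, ℓ⟩
              unfold T
              dsimp only
              split_ifs with h1 h2 <;> simp only [Prod.mk.injEq] <;> constructor
              · rintro ⟨rfl, rfl, hE⟩; exact Or.inl ⟨rfl, rfl, by omega⟩
              · rintro (⟨rfl, rfl, rfl⟩ | ⟨rfl, rfl, rfl⟩)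
                · exact ⟨rfl, rfl, by omega⟩
                · exact absurd h1 (by omega)
              · rintro ⟨rfl, rfl, hE⟩; exact absurd hx1 h1
              · rintro (⟨rfl, rfl, rfl⟩ | ⟨rfl, rfl, rfl⟩)
                · exact absurd hx1 h1
                · exfalso
                  rcases h2 with h2 | h2 <;> omega
              · rintro ⟨rfl, rfl, hE⟩
                push_neg at h2
                exact Or.inr ⟨rfl, rfl, by omega⟩
              · rintro (⟨rfl, rfl, rfl⟩ | ⟨rfl, rfl, rfl⟩)
                · exact absurd hx1 h1
                · push_neg at h2
                  exact ⟨rfl, rfl, by omega⟩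
            have hne : ((i, j, 0) : Fin d × Fin d × ℕ) ≠ (j, i, 0) := by
              intro h
              exact hij (congrArg Prod.fst h)
            rw [count_map_fiber_pair _ _ _ _ _ hne hf, count_idx Y i j 0, count_idx Y j i 0]
            have hN1 : N (Y i) (Y j) 0 = N (S i) (S j) m := by
              rw [NY1 hY hx1 0]
              congr 1
              omega
            have hN2 : N (Y j) (Y i) 0 = N (S i) (S j) m := by
              have h0 := F2 0 (by omega)
              rw [show (S i).card - (S j).card - 0 = m from by omega] at h0
              omega
            simp only [hfinlt]
            split_ifs <;> omega
          · -- m < Δ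
            have hmΔ : m < (S i).card - (S j).card := by omega
            by_cases hm0 : m = 0
            · subst hm0
              by_cases hji : (j : ℕ) < (i : ℕ)
              · -- single fiber (j, i, Δ)
                have hf : ∀ t, T (fun w => (S w).card) t = (i, j, 0) ↔ t = (j, i, (S i).card - (S j).card) := by
                  rintro ⟨u, v, ℓ⟩
                  unfold T
                  dsimp only
                  split_ifs with h1 h2 <;> simp only [Prod.mk.injEq] <;> constructor
                  · rintro ⟨rfl, rfl, hE⟩; exfalso; omega
                  · rintro ⟨rfl, rfl, rfl⟩; exact absurd h1 (by omega)
                  · rintro ⟨rfl, rfl, hE⟩; exact absurd hx1 h1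
                  · rintro ⟨rfl, rfl, rfl⟩
                    exfalso
                    rcases h2 with h2 | h2 <;> omega
                  · rintro ⟨rfl, rfl, hE⟩
                    push_neg at h2
                    exact ⟨rfl, rfl, by omega⟩
                  · rintro ⟨rfl, rfl, rfl⟩; exact ⟨rfl, rfl, by omega⟩
                rw [count_map_fiber_single _ _ _ _ hf, count_idx Y j i ((S i).card - (S j).card)]
                have hN : N (Y j) (Y i) ((S i).card - (S j).card) + ((S i).card - (S j).card) = N (S i) (S j) 0 := by
                  have := F2 ((S i).card - (S j).card) le_rfl
                  simpa using this
                simp only [hfinlt]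
                split_ifs <;> omega
              · -- empty fiber
                have hf : ∀ t, T (fun w => (S w).card) t ≠ (i, j, 0) := by
                  rintro ⟨u, v, ℓ⟩
                  unfold T
                  dsimp only
                  split_ifs with h1 h2 <;>
                    simp only [ne_eq, Prod.mk.injEq, not_and] <;> rintro rfl rfl hE
                  · omega
                  · exact absurd hx1 h1
                  · push_neg at h2
                    omega
                rw [count_map_fiber_empty _ _ _ hf]
                simp only [hfinlt]
                split_ifs <;> omega
            · -- 1 ≤ m < Δ : single fiber (j, i, Δ - m)
              have hf : ∀ t, T (fun w => (S w).card) t = (i, j, m) ↔ t = (j, i, (S i).card - (S j).card - m) := by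
                rintro ⟨u, v, ℓ⟩
                unfold T
                dsimp only
                split_ifs with h1 h2 <;> simp only [Prod.mk.injEq] <;> constructor
                · rintro ⟨rfl, rfl, hE⟩; exfalso; omega
                · rintro ⟨rfl, rfl, rfl⟩; exact absurd h1 (by omega)
                · rintro ⟨rfl, rfl, hE⟩; exact absurd hx1 h1
                · rintro ⟨rfl, rfl, rfl⟩
                  exfalso
                  rcases h2 with h2 | h2 <;> omega
                · rintro ⟨rfl, rfl, hE⟩
                  push_neg at h2
                  exact ⟨rfl, rfl, by omega⟩
                · rintro ⟨rfl, rfl, rfl⟩; exact ⟨rfl, rfl, by omega⟩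
              rw [count_map_fiber_single _ _ _ _ hf, count_idx Y j i ((S i).card - (S j).card - m)]
              have hN : N (Y j) (Y i) ((S i).card - (S j).card - m) + ((S i).card - (S j).card - m)
                  = N (S i) (S j) m := by
                have := F2 ((S i).card - (S j).card - m) (by omega)
                rw [show (S i).card - (S j).card - ((S i).card - (S j).card - m) = m from by omega] at this
                exact this
              simp only [hfinlt]
              split_ifs <;> omega
    · -- (S i).card < (S j).card
      have hx2 : (S i).card < (S j).card := by omega
      have hx2' : (S i).card ≤ (S j).card := by omega
      have F3 : ∀ ℓ, N (Y i) (Y j) ℓ = N (shiftUp (S i) ((S j).card - (S i).card)) (S j) ℓ :=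
        fun ℓ => NY2 hY hx2' ℓ
      by_cases hcond : 0 < m ∨ (j : ℕ) < (i : ℕ)
      · -- single fiber (i, j, m + Δ')
        have hf : ∀ t, T (fun w => (S w).card) t = (i, j, m) ↔ t = (i, j, m + ((S j).card - (S i).card)) := by
          rintro ⟨u, v, ℓ⟩
          unfold T
          dsimp only
          split_ifs with h1 h2 <;> simp only [Prod.mk.injEq] <;> constructor
          · rintro ⟨rfl, rfl, hE⟩; exact absurd h1 (by omega)
          · rintro ⟨rfl, rfl, rfl⟩; exact absurd h1 (by omega)
          · rintro ⟨rfl, rfl, hE⟩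
            refine ⟨rfl, rfl, ?_⟩
            rcases h2 with h2 | h2 <;> omega
          · rintro ⟨rfl, rfl, rfl⟩; exact ⟨rfl, rfl, by omega⟩
          · rintro ⟨rfl, rfl, hE⟩; exact absurd (show (S v).card ≤ (S u).card from hx2') h1
          · rintro ⟨rfl, rfl, rfl⟩
            exfalso
            push_neg at h2
            rcases hcond with hc | hc <;> omega
        rw [count_map_fiber_single _ _ _ _ hf, count_idx Y i j (m + ((S j).card - (S i).card))]
        by_cases hm0 : 0 < m
        · have hN : N (Y i) (Y j) (m + ((S j).card - (S i).card)) = N (S i) (S j) m := by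
            rw [F3]
            have := N_shiftA (S i) (S j) ((S j).card - (S i).card) m
            rw [← this]
          simp only [hfinlt]
          split_ifs <;> omega
        · -- m = 0 and j < i
          have hji : (j : ℕ) < (i : ℕ) := by tauto
          have hm0' : m = 0 := by omega
          subst hm0'
          have hN : N (Y i) (Y j) (0 + ((S j).card - (S i).card)) = N (S i) (S j) 0 := by
            rw [zero_add, F3]
            have hb := N_boundary (S j) (S i) ((S j).card - (S i).card) ((S j).card - (S i).card) (by omega) le_rfl
            rw [show (S j).card - (S i).card - ((S j).card - (S i).card) = 0 from by omega] at hb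
            have hz := N_zero_symm (S i) (S j)
            omega
          simp only [hfinlt]
          split_ifs <;> omega
      · -- empty fiber
        have hf : ∀ t, T (fun w => (S w).card) t ≠ (i, j, m) := by
          rintro ⟨u, v, ℓ⟩
          unfold T
          dsimp only
          split_ifs with h1 h2 <;>
            simp only [ne_eq, Prod.mk.injEq, not_and] <;> rintro rfl rfl hE
          · exact absurd h1 (by omega)
          · rcases h2 with h2 | h2 <;> omega
          · exact h1 hx2'
        rw [count_map_fiber_empty _ _ _ hf]
        simp only [hfinlt]
        split_ifs <;> omega

end HookAux

/-- The multiset equality `𝓗^δ(S) = 𝓗̄^{δ_S}(Q) ∪ 𝓗^δ(C)`, where `Q` is the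
balanced quotient and `C` the core of `S`, and `𝓗̄^{δ_S}(Q)` is the multiset of
sign-modified lengths `h̄^{δ_S}(z)` of the hooks of `Q`. -/
theorem hookLens_eq_signed_quot_add_core (d : ℕ) (hd : 0 < d) (S Y : Fin d → Finset ℕ)
    (hY : IsBalancedQuotient S Y) (c : Fin d → ℝ) (k : ℝ) (hk : 0 ≤ k) :
    hookLens c k S =
      (symbolHooks Y).val.map (signedLen (fun i => (S i).card) c k) +
        hookLens c k (coreSymbol S) := by
  have main := HookAux.main_multiset S Y hY
  have e1 : hookLens c k S = ((symbolHooks S).val.map HookAux.idx).map (HookAux.tval c k) := by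
    rw [Multiset.map_map]
    rfl
  have e2 : (symbolHooks Y).val.map (signedLen (fun i => (S i).card) c k)
      = (((symbolHooks Y).val.map HookAux.idx).map (HookAux.T fun w => (S w).card)).map
          (HookAux.tval c k) := by
    rw [Multiset.map_map, Multiset.map_map]
    exact Multiset.map_congr rfl fun z _ => HookAux.signedLen_eq_tval _ c k z
  have e3 : hookLens c k (coreSymbol S)
      = ((symbolHooks (coreSymbol S)).val.map HookAux.idx).map (HookAux.tval c k) := by
    rw [Multiset.map_map]
    rfl
  rw [e1, e2, e3, main, Multiset.map_add]
end

section
/- Let S = (X_0,…,X_{d−1}) be a d-symbol with balanced quotient Q = Q(S) and core C = C(S), where |X_i| = x_i. Let δ* = (0,1,…,d−1; d) and δ*_S = (x_0 d, 1 + x_1 d, …, (d−1) + x_{d−1} d; d). Then there is a multiset equality 𝓗^{δ*}(S) = 𝓗^{δ*}(C) ∪ abs(𝓗^{δ*_S}(Q)), where abs(𝓗^{δ*_S}(Q)) = {|h| : h ∈ 𝓗^{δ*_S}(Q)} (as a multiset) and ∪ is multiset union (sum). -/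
namespace BGOaux

open Finset

/-- entry function of a beta-set -/
def ent (X : Finset ℕ) (a : ℕ) : ℕ := a - (X.filter (· < a)).card

def entries (X : Finset ℕ) : Multiset ℕ := X.val.map (ent X)

lemma partitionOf_eq (X : Finset ℕ) :
    partitionOf X = Multiset.filter (· ≠ 0) (entries X) := rfl

lemma mem_shiftUp {X : Finset ℕ} {s a : ℕ} :
    a ∈ shiftUp X s ↔ (∃ b ∈ X, b + s = a) ∨ a < s := by
  simp [shiftUp]

lemma mem_shiftUp' {X : Finset ℕ} {s a : ℕ} :
    a ∈ shiftUp X s ↔ (s ≤ a ∧ a - s ∈ X) ∨ a < s := by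
  rw [mem_shiftUp]
  constructor
  · rintro (⟨b, hb, rfl⟩ | h)
    · exact Or.inl ⟨Nat.le_add_left _ _, by simpa⟩
    · exact Or.inr h
  · rintro (⟨h1, h2⟩ | h)
    · exact Or.inl ⟨a - s, h2, by omega⟩
    · exact Or.inr h

lemma card_shiftUp (X : Finset ℕ) (s : ℕ) : (shiftUp X s).card = X.card + s := by
  rw [shiftUp, card_union_of_disjoint, card_image_of_injective _ (add_left_injective s),
    card_range]
  · rw [Finset.disjoint_left]
    rintro a ha hr
    simp only [mem_image] at ha
    obtain ⟨b, _, rfl⟩ := ha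
    simp only [mem_range] at hr
    omega

lemma shiftUp_shiftUp (X : Finset ℕ) (s t : ℕ) :
    shiftUp (shiftUp X s) t = shiftUp X (s + t) := by
  ext a
  simp only [mem_shiftUp']
  constructor
  · rintro (⟨h1, (⟨h2, h3⟩ | h2)⟩ | h)
    · left; exact ⟨by omega, by convert h3 using 1; omega⟩
    · right; omega
    · right; omega
  · rintro (⟨h1, h2⟩ | h)
    · left
      refine ⟨by omega, Or.inl ⟨by omega, ?_⟩⟩
      convert h2 using 1; omega
    · by_cases ht : a < t
      · exact Or.inr ht
      · exact Or.inl ⟨by omega, Or.inr (by omega)⟩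

lemma filter_lt_card_le (X : Finset ℕ) (a : ℕ) : (X.filter (· < a)).card ≤ a := by
  calc (X.filter (· < a)).card ≤ (Finset.range a).card := by
        apply card_le_card
        intro b hb
        simp only [mem_filter] at hb
        simpa using hb.2
    _ = a := card_range a

lemma ent_mono (X : Finset ℕ) {a a' : ℕ} (h : a ≤ a') : ent X a ≤ ent X a' := by
  have h1 : X.filter (· < a') ⊆ X.filter (· < a) ∪ Finset.Ico a a' := by
    intro b hb
    simp only [mem_filter, mem_union, Finset.mem_Ico] at hb ⊢
    obtain ⟨hb, hlt⟩ := hb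
    by_cases hba : b < a
    · exact Or.inl ⟨hb, hba⟩
    · exact Or.inr ⟨by omega, hlt⟩
  have h2 : (X.filter (· < a')).card ≤ (X.filter (· < a)).card + (a' - a) := by
    calc (X.filter (· < a')).card ≤ (X.filter (· < a) ∪ Finset.Ico a a').card :=
          card_le_card h1
      _ ≤ (X.filter (· < a)).card + (Finset.Ico a a').card := card_union_le _ _
      _ = (X.filter (· < a)).card + (a' - a) := by rw [Nat.card_Ico]
  have h3 := filter_lt_card_le X a
  unfold ent
  omega

lemma filter_lt_max' {X : Finset ℕ} (h : X.Nonempty) :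
    X.filter (· < X.max' h) = X.erase (X.max' h) := by
  ext b
  simp only [mem_filter, mem_erase]
  constructor
  · rintro ⟨hb, hlt⟩
    exact ⟨by omega, hb⟩
  · rintro ⟨hne, hb⟩
    refine ⟨hb, ?_⟩
    have := X.le_max' b hb
    omega

lemma card_le_max' {X : Finset ℕ} (h : X.Nonempty) : X.card ≤ X.max' h + 1 := by
  calc X.card ≤ (Finset.range (X.max' h + 1)).card := by
        apply card_le_card
        intro b hb
        simp only [mem_range]
        have := X.le_max' b hb
        omega
    _ = X.max' h + 1 := card_range _

lemma ent_max' {X : Finset ℕ} (h : X.Nonempty) :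
    ent X (X.max' h) = X.max' h - (X.card - 1) := by
  unfold ent
  rw [filter_lt_max' h, card_erase_of_mem (X.max'_mem h)]

lemma mem_entries_le {X : Finset ℕ} (h : X.Nonempty) {p : ℕ}
    (hp : p ∈ entries X) : p ≤ ent X (X.max' h) := by
  obtain ⟨a, ha, rfl⟩ := Multiset.mem_map.mp hp
  exact ent_mono X (X.le_max' a ha)

lemma sup_partitionOf {X : Finset ℕ} (h : X.Nonempty) :
    (partitionOf X).sup = ent X (X.max' h) := by
  apply le_antisymm
  · rw [Multiset.sup_le]
    intro p hp
    rw [partitionOf_eq, Multiset.mem_filter] at hp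
    exact mem_entries_le h hp.1
  · rcases eq_or_ne (ent X (X.max' h)) 0 with he | he
    · simp [he]
    · apply Multiset.le_sup
      rw [partitionOf_eq, Multiset.mem_filter]
      exact ⟨Multiset.mem_map_of_mem _ (X.max'_mem h), he⟩

lemma max'_eq {X : Finset ℕ} (h : X.Nonempty) :
    X.max' h = (partitionOf X).sup + (X.card - 1) := by
  rw [sup_partitionOf h, ent_max' h]
  have h1 := card_le_max' h
  have h2 : 1 ≤ X.card := Finset.card_pos.mpr h
  omega

lemma entries_erase {X : Finset ℕ} (h : X.Nonempty) :
    entries (X.erase (X.max' h)) = (entries X).erase (ent X (X.max' h)) := by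
  set a := X.max' h with ha
  have hmem : a ∈ X.val := X.max'_mem h
  have hval : X.val = a ::ₘ (X.erase a).val := by
    rw [Finset.erase_val, Multiset.cons_erase hmem]
  have hcong : ∀ b ∈ (X.erase a).val, ent (X.erase a) b = ent X b := by
    intro b hb
    have hbX : b ∈ X.erase a := hb
    unfold ent
    congr 1
    congr 1
    ext c
    simp only [mem_filter, mem_erase]
    constructor
    · rintro ⟨⟨_, hc⟩, hlt⟩
      exact ⟨hc, hlt⟩
    · rintro ⟨hc, hlt⟩
      have hba : b ≤ a := X.le_max' b (Finset.mem_of_mem_erase hbX)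
      have hca : c ≤ a := X.le_max' c hc
      refine ⟨⟨?_, hc⟩, hlt⟩
      omega
  calc entries (X.erase a) = (X.erase a).val.map (ent X) := Multiset.map_congr rfl hcong
    _ = (entries X).erase (ent X a) := by
        rw [entries, hval, Multiset.map_cons, Multiset.erase_cons_head]

lemma multiset_filter_erase {α : Type*} [DecidableEq α] (p : α → Prop) [DecidablePred p]
    (s : Multiset α) (a : α) :
    Multiset.filter p (s.erase a) =
      if p a then (Multiset.filter p s).erase a else Multiset.filter p s := by
  split_ifs with hpa
  · ext b
    rcases eq_or_ne b a with rfl | hba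
    · rw [Multiset.count_erase_self, Multiset.count_filter, Multiset.count_filter,
        if_pos hpa, if_pos hpa, Multiset.count_erase_self]
    · rw [Multiset.count_erase_of_ne hba, Multiset.count_filter, Multiset.count_filter,
        Multiset.count_erase_of_ne hba]
  · ext b
    rcases eq_or_ne b a with rfl | hba
    · rw [Multiset.count_filter, Multiset.count_filter, if_neg hpa, if_neg hpa]
    · rw [Multiset.count_filter, Multiset.count_filter, Multiset.count_erase_of_ne hba]

lemma partitionOf_erase {X : Finset ℕ} (h : X.Nonempty) :
    partitionOf (X.erase (X.max' h)) =
      if (partitionOf X).sup = 0 then partitionOf X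
      else (partitionOf X).erase ((partitionOf X).sup) := by
  rw [partitionOf_eq, entries_erase h, ← sup_partitionOf h, multiset_filter_erase,
    ← partitionOf_eq]
  rcases eq_or_ne ((partitionOf X).sup) 0 with h0 | h0
  · rw [if_neg (by simp [h0]), if_pos h0]
  · rw [if_pos h0, if_neg h0]

lemma beta_ext_aux : ∀ (n : ℕ) (U V : Finset ℕ), U.card = n → V.card = n →
    partitionOf U = partitionOf V → U = V := by
  intro n
  induction n with
  | zero =>
    intro U V hU hV _
    rw [Finset.card_eq_zero] at hU hV
    rw [hU, hV]
  | succ n ih =>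
    intro U V hU hV hpart
    have hUne : U.Nonempty := Finset.card_pos.mp (by omega)
    have hVne : V.Nonempty := Finset.card_pos.mp (by omega)
    have hmax : U.max' hUne = V.max' hVne := by
      rw [max'_eq hUne, max'_eq hVne, hpart, hU, hV]
    have hcardU : (U.erase (U.max' hUne)).card = n := by
      rw [card_erase_of_mem (U.max'_mem hUne)]; omega
    have hcardV : (V.erase (V.max' hVne)).card = n := by
      rw [card_erase_of_mem (V.max'_mem hVne)]; omega
    have hpe : partitionOf (U.erase (U.max' hUne)) = partitionOf (V.erase (V.max' hVne)) := by
      rw [partitionOf_erase hUne, partitionOf_erase hVne, hpart]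
    have herase := ih _ _ hcardU hcardV hpe
    have h1 : U = insert (U.max' hUne) (U.erase (U.max' hUne)) :=
      (Finset.insert_erase (U.max'_mem hUne)).symm
    have h2 : V = insert (V.max' hVne) (V.erase (V.max' hVne)) :=
      (Finset.insert_erase (V.max'_mem hVne)).symm
    rw [h1, h2, herase, hmax]

lemma beta_ext {U V : Finset ℕ} (hcard : U.card = V.card)
    (hpart : partitionOf U = partitionOf V) : U = V :=
  beta_ext_aux V.card U V hcard rfl hpart

lemma val_shiftUp (X : Finset ℕ) (s : ℕ) :
    (shiftUp X s).val = X.val.map (· + s) + (Finset.range s).val := by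
  have hdisj : Disjoint (X.image (· + s)) (Finset.range s) := by
    rw [Finset.disjoint_left]
    rintro a ha hr
    simp only [mem_image] at ha
    obtain ⟨b, _, rfl⟩ := ha
    simp only [mem_range] at hr
    omega
  have : shiftUp X s = (X.image (· + s)).disjUnion (Finset.range s) hdisj := by
    rw [Finset.disjUnion_eq_union]; rfl
  rw [this]
  show (X.image (· + s)).val + (Finset.range s).val = _
  rw [image_val_of_injOn (Set.injOn_of_injective (add_left_injective s))]

lemma ent_shiftUp_mem {X : Finset ℕ} {s a : ℕ} (ha : a ∈ X) :
    ent (shiftUp X s) (a + s) = ent X a := by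
  unfold ent
  have hsplit : (shiftUp X s).filter (· < a + s) =
      (X.image (· + s)).filter (· < a + s) ∪ (Finset.range s).filter (· < a + s) :=
    filter_union _ _ _
  have h1 : (Finset.range s).filter (· < a + s) = Finset.range s := by
    apply filter_true_of_mem
    intro b hb
    simp only [mem_range] at hb
    omega
  have h2 : (X.image (· + s)).filter (· < a + s) = (X.filter (· < a)).image (· + s) := by
    rw [filter_image]
    congr 1
    apply filter_congr
    intro b _
    simp
  have hdisj : Disjoint ((X.image (· + s)).filter (· < a + s))
      ((Finset.range s).filter (· < a + s)) := by
    apply disjoint_filter_filter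
    rw [Finset.disjoint_left]
    rintro c hc hr
    simp only [mem_image] at hc
    obtain ⟨b, _, rfl⟩ := hc
    simp only [mem_range] at hr
    omega
  have hcard : ((shiftUp X s).filter (· < a + s)).card = (X.filter (· < a)).card + s := by
    rw [hsplit, card_union_of_disjoint hdisj, h1, h2,
      card_image_of_injective _ (add_left_injective s), card_range]
  rw [hcard]
  have := filter_lt_card_le X a
  omega

lemma ent_shiftUp_range {X : Finset ℕ} {s u : ℕ} (hu : u < s) :
    ent (shiftUp X s) u = 0 := by
  unfold ent
  have : u ≤ ((shiftUp X s).filter (· < u)).card := by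
    calc u = (Finset.range u).card := (card_range u).symm
      _ ≤ _ := by
          apply card_le_card
          intro b hb
          simp only [mem_range] at hb
          simp only [mem_filter]
          exact ⟨mem_shiftUp'.mpr (Or.inr (by omega)), by omega⟩
  omega

lemma entries_shiftUp (X : Finset ℕ) (s : ℕ) :
    entries (shiftUp X s) = entries X + Multiset.replicate s 0 := by
  rw [entries, val_shiftUp, Multiset.map_add, Multiset.map_map]
  congr 1
  · exact Multiset.map_congr rfl fun a ha => ent_shiftUp_mem ha
  · rw [Multiset.eq_replicate]
    constructor
    · simp
    · intro b hb
      obtain ⟨u, hu, rfl⟩ := Multiset.mem_map.mp hb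
      exact ent_shiftUp_range (by simpa using hu)

lemma partitionOf_shiftUp (X : Finset ℕ) (s : ℕ) :
    partitionOf (shiftUp X s) = partitionOf X := by
  rw [partitionOf_eq, entries_shiftUp, Multiset.filter_add, ← partitionOf_eq]
  have : Multiset.filter (· ≠ 0) (Multiset.replicate s (0 : ℕ)) = 0 := by
    rw [Multiset.filter_eq_nil]
    intro a ha
    rw [Multiset.eq_of_mem_replicate ha]
    simp
  rw [this, add_zero]

lemma eq_shiftUp_of_partition {U V : Finset ℕ} {s : ℕ}
    (hpart : partitionOf V = partitionOf U) (hcard : V.card = U.card + s) :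
    V = shiftUp U s := by
  apply beta_ext
  · rw [card_shiftUp]; exact hcard
  · rw [partitionOf_shiftUp]; exact hpart

/-- The number of hooks of length `m` from β-set `A` to β-set `B`. -/
def Nhk (A B : Finset ℕ) (m : ℕ) : ℕ := (A.filter fun a => m ≤ a ∧ a - m ∉ B).card

lemma not_mem_shiftUp {B : Finset ℕ} {s b : ℕ} :
    b ∉ shiftUp B s ↔ s ≤ b ∧ b - s ∉ B := by
  rw [mem_shiftUp']
  constructor
  · intro h
    have h1 : s ≤ b := by by_contra hc; exact h (Or.inr (by omega))
    exact ⟨h1, fun hm => h (Or.inl ⟨h1, hm⟩)⟩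
  · rintro ⟨h1, h2⟩ (⟨_, h3⟩ | h3)
    · exact h2 h3
    · omega

lemma Nhk_shiftUp_shiftUp (A B : Finset ℕ) (s m : ℕ) :
    Nhk (shiftUp A s) (shiftUp B s) m = Nhk A B m := by
  unfold Nhk
  symm
  apply card_nbij' (· + s) (· - s)
  · intro a ha
    simp only [mem_coe, mem_filter] at ha ⊢
    obtain ⟨haA, hm, hnb⟩ := ha
    refine ⟨mem_shiftUp.mpr (Or.inl ⟨a, haA, rfl⟩), by omega, ?_⟩
    rw [not_mem_shiftUp]
    refine ⟨by omega, ?_⟩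
    have he : a + s - m - s = a - m := by omega
    rw [he]; exact hnb
  · intro u hu
    simp only [mem_coe, mem_filter] at hu ⊢
    obtain ⟨huA, hm, hnb⟩ := hu
    rw [not_mem_shiftUp] at hnb
    obtain ⟨hs1, hs2⟩ := hnb
    have hus : s + m ≤ u := by omega
    rw [mem_shiftUp'] at huA
    rcases huA with ⟨_, huA⟩ | h
    · refine ⟨huA, by omega, ?_⟩
      have he : u - s - m = u - m - s := by omega
      rw [he]; exact hs2
    · omega
  · intro a _; dsimp only; omega
  · intro u hu
    simp only [mem_coe, mem_filter] at hu ⊢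
    obtain ⟨_, hm, hnb⟩ := hu
    rw [not_mem_shiftUp] at hnb
    omega

lemma Nhk_shiftUp_right (A B : Finset ℕ) {t m : ℕ} (h : t ≤ m) :
    Nhk A (shiftUp B t) (m - t) = Nhk A B m := by
  unfold Nhk
  congr 1
  apply filter_congr
  intro a _
  simp only [not_mem_shiftUp]
  constructor
  · rintro ⟨h1, h2, h3⟩
    have he : a - (m - t) - t = a - m := by omega
    rw [he] at h3
    exact ⟨by omega, h3⟩
  · rintro ⟨h1, h2⟩
    refine ⟨by omega, by omega, ?_⟩
    have he : a - (m - t) - t = a - m := by omega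
    rw [he]; exact h2

lemma Nhk_shiftUp_left (A B : Finset ℕ) (t m : ℕ) :
    Nhk (shiftUp A t) B (m + t) = Nhk A B m := by
  unfold Nhk
  symm
  apply card_nbij' (· + t) (· - t)
  · intro a ha
    simp only [mem_coe, mem_filter] at ha ⊢
    obtain ⟨haA, hm, hnb⟩ := ha
    refine ⟨mem_shiftUp.mpr (Or.inl ⟨a, haA, rfl⟩), by omega, ?_⟩
    have he : a + t - (m + t) = a - m := by omega
    rw [he]; exact hnb
  · intro u hu
    simp only [mem_coe, mem_filter] at hu ⊢
    obtain ⟨huA, hm, hnb⟩ := hu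
    rw [mem_shiftUp'] at huA
    rcases huA with ⟨h1, h2⟩ | h
    · refine ⟨h2, by omega, ?_⟩
      have he : u - t - m = u - (m + t) := by omega
      rw [he]; exact hnb
    · omega
  · intro a _; dsimp only; omega
  · intro u hu
    simp only [mem_coe, mem_filter] at hu ⊢
    omega

lemma Nhk_compl (A B : Finset ℕ) (n : ℕ) :
    Nhk A B n + (B.filter fun c => c + n ∈ A).card + (A.filter (· < n)).card = A.card := by
  have hb : (A.filter fun a => n ≤ a ∧ a - n ∈ B).card
      = (B.filter fun c => c + n ∈ A).card := by
    apply card_nbij' (· - n) (· + n)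
    · intro a ha
      simp only [mem_coe, mem_filter] at ha ⊢
      refine ⟨ha.2.2, ?_⟩
      have he : a - n + n = a := by omega
      rw [he]; exact ha.1
    · intro c hc
      simp only [mem_coe, mem_filter] at hc ⊢
      exact ⟨hc.2, by omega, by simpa using hc.1⟩
    · intro a ha
      simp only [mem_coe, mem_filter] at ha ⊢
      omega
    · intro c _; dsimp only; omega
  have h1 : (A.filter fun a => n ≤ a ∧ a - n ∉ B).card
      + (A.filter fun a => n ≤ a ∧ a - n ∈ B).card = (A.filter fun a => n ≤ a).card := by
    have h := card_filter_add_card_filter_not (s := A.filter fun a => n ≤ a)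
      (p := fun a => a - n ∉ B)
    rw [filter_filter, filter_filter] at h
    rw [show (A.filter fun a => n ≤ a ∧ ¬ a - n ∉ B)
        = A.filter fun a => n ≤ a ∧ a - n ∈ B from
      filter_congr fun a _ => by simp] at h
    exact h
  have h2 : (A.filter fun a => n ≤ a).card + (A.filter (· < n)).card = A.card := by
    have := card_filter_add_card_filter_not (s := A) (p := fun a => n ≤ a)
    rw [show (A.filter fun a => ¬ n ≤ a) = A.filter (· < n) from
      filter_congr fun a _ => by omega] at this
    exact this
  unfold Nhk
  omega

lemma Nhk_shift_flip (A B : Finset ℕ) {n Δ : ℕ} (hn : n ≤ Δ) :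
    Nhk (shiftUp B Δ) A (Δ - n) + (B.filter fun c => c + n ∈ A).card
      + (A.filter (· < n)).card = B.card + n := by
  unfold Nhk
  have hsplit : ((shiftUp B Δ).filter fun u => Δ - n ≤ u ∧ u - (Δ - n) ∉ A)
      = ((B.image (· + Δ)).filter fun u => Δ - n ≤ u ∧ u - (Δ - n) ∉ A)
        ∪ ((Finset.range Δ).filter fun u => Δ - n ≤ u ∧ u - (Δ - n) ∉ A) :=
    filter_union _ _ _
  have hdisj : Disjoint ((B.image (· + Δ)).filter fun u => Δ - n ≤ u ∧ u - (Δ - n) ∉ A)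
      ((Finset.range Δ).filter fun u => Δ - n ≤ u ∧ u - (Δ - n) ∉ A) := by
    apply disjoint_filter_filter
    rw [Finset.disjoint_left]
    rintro c hc hr
    simp only [mem_image] at hc
    obtain ⟨b, _, rfl⟩ := hc
    simp only [mem_range] at hr
    omega
  have himg : ((B.image (· + Δ)).filter fun u => Δ - n ≤ u ∧ u - (Δ - n) ∉ A).card
      = (B.filter fun c => c + n ∉ A).card := by
    rw [filter_image, card_image_of_injective _ (add_left_injective Δ)]
    congr 1
    apply filter_congr
    intro c _
    have he : c + Δ - (Δ - n) = c + n := by omega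
    simp only [he]
    constructor
    · rintro ⟨_, h2⟩; exact h2
    · intro h2; exact ⟨by omega, h2⟩
  have hrng : ((Finset.range Δ).filter fun u => Δ - n ≤ u ∧ u - (Δ - n) ∉ A).card
      = ((Finset.range n).filter (· ∉ A)).card := by
    apply card_nbij' (· - (Δ - n)) (· + (Δ - n))
    · intro u hu
      simp only [mem_coe, mem_filter, mem_range] at hu ⊢
      exact ⟨by omega, hu.2.2⟩
    · intro t ht
      simp only [mem_coe, mem_filter, mem_range] at ht ⊢
      refine ⟨by omega, by omega, ?_⟩
      have he : t + (Δ - n) - (Δ - n) = t := by omega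
      rw [he]; exact ht.2
    · intro u hu
      simp only [mem_coe, mem_filter, mem_range] at hu ⊢
      omega
    · intro t _; dsimp only; omega
  have hBsum : (B.filter fun c => c + n ∉ A).card + (B.filter fun c => c + n ∈ A).card
      = B.card := by
    have := card_filter_add_card_filter_not (s := B) (p := fun c => c + n ∉ A)
    rw [show (B.filter fun c => ¬ c + n ∉ A) = B.filter fun c => c + n ∈ A from
      filter_congr fun c _ => by simp] at this
    exact this
  have hnsum : ((Finset.range n).filter (· ∉ A)).card + (A.filter (· < n)).card = n := by
    have heq : (A.filter (· < n)) = (Finset.range n).filter (· ∈ A) := by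
      ext a
      simp only [mem_filter, mem_range]
      exact ⟨fun ⟨h1, h2⟩ => ⟨h2, h1⟩, fun ⟨h1, h2⟩ => ⟨h2, h1⟩⟩
    have h := card_filter_add_card_filter_not (s := Finset.range n) (p := (· ∉ A))
    rw [show ((Finset.range n).filter fun c => ¬ c ∉ A) = (Finset.range n).filter (· ∈ A) from
      filter_congr fun c _ => by simp, card_range] at h
    rw [heq]
    omega
  rw [hsplit, card_union_of_disjoint hdisj, himg, hrng]
  omega

lemma Nhk_master_b (A B : Finset ℕ) {n Δ : ℕ} (hcard : B.card + Δ = A.card) (hn : n ≤ Δ) :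
    Nhk A B n = (Δ - n) + Nhk (shiftUp B Δ) A (Δ - n) := by
  have h1 := Nhk_compl A B n
  have h2 := Nhk_shift_flip A B hn
  omega

lemma Nhk_zero_symm {A B : Finset ℕ} (hcard : A.card = B.card) :
    Nhk A B 0 = Nhk B A 0 := by
  unfold Nhk
  have hA : (A.filter fun a => 0 ≤ a ∧ a - 0 ∉ B) = A.filter (· ∉ B) := by
    apply filter_congr; intro a _; simp
  have hB : (B.filter fun a => 0 ≤ a ∧ a - 0 ∉ A) = B.filter (· ∉ A) := by
    apply filter_congr; intro a _; simp
  rw [hA, hB]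
  have h1 : (A.filter (· ∉ B)).card + (A.filter (· ∈ B)).card = A.card := by
    have := card_filter_add_card_filter_not (s := A) (p := (· ∉ B))
    rw [show (A.filter fun c => ¬ c ∉ B) = A.filter (· ∈ B) from
      filter_congr fun c _ => by simp] at this
    exact this
  have h2 : (B.filter (· ∉ A)).card + (B.filter (· ∈ A)).card = B.card := by
    have := card_filter_add_card_filter_not (s := B) (p := (· ∉ A))
    rw [show (B.filter fun c => ¬ c ∉ A) = B.filter (· ∈ A) from
      filter_congr fun c _ => by simp] at this
    exact this
  have h3 : (A.filter (· ∈ B)) = (B.filter (· ∈ A)) := by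
    ext a
    simp only [mem_filter]
    exact ⟨fun ⟨x, y⟩ => ⟨y, x⟩, fun ⟨x, y⟩ => ⟨y, x⟩⟩
  rw [h3] at h1
  omega

lemma Nhk_range (x z n : ℕ) : Nhk (Finset.range x) (Finset.range z) n = x - z - n := by
  unfold Nhk
  have heq : ((Finset.range x).filter fun a => n ≤ a ∧ a - n ∉ Finset.range z)
      = (Finset.range x).filter fun a => z + n ≤ a := by
    apply filter_congr
    intro a _
    simp only [mem_range, not_lt]
    omega
  rw [heq]
  have : ((Finset.range x).filter fun a => z + n ≤ a) = Finset.Ico (z + n) x := by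
    ext a
    simp only [mem_filter, mem_range, Finset.mem_Ico]
    omega
  rw [this, Nat.card_Ico]
  omega

/-- Bound: members of the symbol are at most the global sup. -/
lemma le_sb {d : ℕ} {T : Fin d → Finset ℕ} {i : Fin d} {a : ℕ} (ha : a ∈ T i) :
    a ≤ Finset.univ.sup fun i => (T i).sup id := by
  calc a = id a := rfl
    _ ≤ (T i).sup id := Finset.le_sup ha
    _ ≤ _ := Finset.le_sup (f := fun i => (T i).sup id) (mem_univ i)

lemma mem_symbolHooks {d : ℕ} {T : Fin d → Finset ℕ} {z : ℕ × ℕ × Fin d × Fin d} :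
    z ∈ symbolHooks T ↔ z.1 ∈ T z.2.2.1 ∧ z.2.1 ∉ T z.2.2.2 ∧
      (z.2.1 < z.1 ∨ (z.1 = z.2.1 ∧ z.2.2.2 < z.2.2.1)) := by
  unfold symbolHooks
  rw [mem_filter]
  constructor
  · exact fun h => h.2
  · intro h
    refine ⟨?_, h⟩
    have hz1 : z.1 ≤ Finset.univ.sup fun i => (T i).sup id := le_sb h.1
    have hz2 : z.2.1 ≤ z.1 := by rcases h.2.2 with h' | ⟨h', _⟩ <;> omega
    simp only [mem_product, mem_range, mem_univ, and_true]
    omega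

lemma mem_Hij {d : ℕ} {T : Fin d → Finset ℕ} {i j : Fin d} {m : ℕ}
    {z : ℕ × ℕ × Fin d × Fin d} :
    z ∈ Hij T i j m ↔ z ∈ symbolHooks T ∧ z.2.2.1 = i ∧ z.2.2.2 = j ∧ z.1 - z.2.1 = m := by
  unfold Hij
  rw [mem_filter]

lemma hij_card {d : ℕ} (T : Fin d → Finset ℕ) (i j : Fin d) (m : ℕ) :
    (Hij T i j m).card = if 1 ≤ m ∨ j < i then Nhk (T i) (T j) m else 0 := by
  split_ifs with hleg
  · unfold Nhk
    symm
    apply card_bij' (fun a _ => ((a, a - m, i, j) : ℕ × ℕ × Fin d × Fin d))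
      (fun z _ => z.1)
    · intro a ha
      simp only [mem_filter] at ha
      obtain ⟨haT, hm, hnb⟩ := ha
      rw [mem_Hij, mem_symbolHooks]
      dsimp only
      refine ⟨⟨haT, hnb, ?_⟩, rfl, rfl, by omega⟩
      rcases hleg with h1 | h1
      · left; omega
      · rcases Nat.eq_zero_or_pos m with rfl | hm1
        · right; exact ⟨by omega, h1⟩
        · left; omega
    · intro z hz
      rw [mem_Hij, mem_symbolHooks] at hz
      obtain ⟨⟨h1, h2, h3⟩, hi, hj, hm⟩ := hz
      rw [mem_filter]
      have hba : z.2.1 ≤ z.1 := by rcases h3 with h' | ⟨h', _⟩ <;> omega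
      rw [hi] at h1
      rw [hj] at h2
      refine ⟨h1, by omega, ?_⟩
      have he : z.1 - m = z.2.1 := by omega
      rw [he]; exact h2
    · intro a _; rfl
    · intro z hz
      rw [mem_Hij, mem_symbolHooks] at hz
      obtain ⟨⟨h1, h2, h3⟩, hi, hj, hm⟩ := hz
      have hba : z.2.1 ≤ z.1 := by rcases h3 with h' | ⟨h', _⟩ <;> omega
      obtain ⟨a, b, u, v⟩ := z
      simp only at hi hj hm hba
      refine Prod.ext rfl (Prod.ext ?_ (Prod.ext ?_ ?_)) <;> simp only
      · omega
      · exact hi.symm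
      · exact hj.symm
  · rw [Finset.card_eq_zero, Finset.eq_empty_iff_forall_notMem]
    intro z hz
    rw [mem_Hij, mem_symbolHooks] at hz
    obtain ⟨⟨h1, h2, h3⟩, hi, hj, hm⟩ := hz
    push_neg at hleg
    rcases h3 with h' | ⟨h', hlt⟩
    · omega
    · rw [hi, hj] at hlt
      exact absurd hlt (not_lt.mpr hleg.2)

lemma hij_empty {d : ℕ} (T : Fin d → Finset ℕ) (i j : Fin d) {m : ℕ}
    (hm : (Finset.univ.sup fun i => (T i).sup id) < m) : Hij T i j m = ∅ := by
  rw [Finset.eq_empty_iff_forall_notMem]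
  intro z hz
  rw [mem_Hij, mem_symbolHooks] at hz
  obtain ⟨⟨h1, h2, h3⟩, hi, hj, hm'⟩ := hz
  have hz1 : z.1 ≤ Finset.univ.sup fun i => (T i).sup id := le_sb h1
  omega

lemma sum_singleton_eq_map {α : Type*} (s : Finset α) (f : α → ℝ) :
    ∑ z ∈ s, ({f z} : Multiset ℝ) = s.val.map f := by
  rw [Finset.sum_eq_multiset_sum]
  rw [show s.val.map (fun z => ({f z} : Multiset ℝ))
      = (s.val.map f).map (fun a => ({a} : Multiset ℝ)) from (Multiset.map_map _ _ _).symm]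
  exact Multiset.sum_map_singleton _

lemma symbolHooks_decomp {d : ℕ} (T : Fin d → Finset ℕ) (f : ℕ × ℕ × Fin d × Fin d → ℝ)
    {L : ℕ} (hL : (Finset.univ.sup fun i => (T i).sup id) < L) :
    (symbolHooks T).val.map f =
      ∑ p ∈ (Finset.univ ×ˢ Finset.univ) ×ˢ Finset.range L,
        (Hij T p.1.1 p.1.2 p.2).val.map f := by
  have hfib : ∀ (p : (Fin d × Fin d) × ℕ), Hij T p.1.1 p.1.2 p.2
      = (symbolHooks T).filter
        (fun z => (((z.2.2.1, z.2.2.2), z.1 - z.2.1) : (Fin d × Fin d) × ℕ) = p) := by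
    intro p
    obtain ⟨⟨pi, pj⟩, pn⟩ := p
    ext z
    rw [mem_Hij, mem_filter]
    simp only [Prod.mk.injEq]
    tauto
  have hmaps : ∀ z ∈ symbolHooks T,
      (((z.2.2.1, z.2.2.2), z.1 - z.2.1) : (Fin d × Fin d) × ℕ)
        ∈ (Finset.univ ×ˢ Finset.univ) ×ˢ Finset.range L := by
    intro z hz
    rw [mem_symbolHooks] at hz
    have hz1 : z.1 ≤ Finset.univ.sup fun i => (T i).sup id := le_sb hz.1
    simp only [mem_product, mem_range, mem_univ, true_and, and_true]
    omega
  calc (symbolHooks T).val.map f = ∑ z ∈ symbolHooks T, ({f z} : Multiset ℝ) :=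
        (sum_singleton_eq_map _ _).symm
    _ = ∑ p ∈ (Finset.univ ×ˢ Finset.univ) ×ˢ Finset.range L,
          ∑ z ∈ (symbolHooks T).filter
            (fun z => (((z.2.2.1, z.2.2.2), z.1 - z.2.1) : (Fin d × Fin d) × ℕ) = p),
            ({f z} : Multiset ℝ) :=
        (Finset.sum_fiberwise_of_maps_to hmaps _).symm
    _ = _ := by
        apply Finset.sum_congr rfl
        intro p _
        rw [← hfib p, sum_singleton_eq_map]

lemma map_const_of_forall {α : Type*} {s : Finset α} {g : α → ℝ} {v : ℝ}
    (h : ∀ z ∈ s, g z = v) :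
    s.val.map g = Multiset.replicate s.card v := by
  rw [Multiset.eq_replicate]
  constructor
  · rw [Multiset.card_map]; rfl
  · intro b hb
    obtain ⟨z, hz, rfl⟩ := Multiset.mem_map.mp hb
    exact h z hz

lemma hookLen_on_hij {d : ℕ} {T : Fin d → Finset ℕ} {i j : Fin d} {m : ℕ} (c : Fin d → ℝ)
    (k : ℝ) {z : ℕ × ℕ × Fin d × Fin d} (hz : z ∈ Hij T i j m) :
    hookLen c k z = k * m + c i - c j := by
  rw [mem_Hij] at hz
  obtain ⟨_, h1, h2, h3⟩ := hz
  unfold hookLen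
  rw [h1, h2, h3]

lemma nhk_zero_of_large {d : ℕ} {T : Fin d → Finset ℕ} {i j : Fin d} {m : ℕ}
    (h : (Finset.univ.sup fun i => (T i).sup id) < m) : Nhk (T i) (T j) m = 0 := by
  unfold Nhk
  rw [Finset.card_eq_zero, Finset.filter_eq_empty_iff]
  intro a ha hc
  have := le_sb ha
  omega

lemma nhk_quot_eq {d : ℕ} (S Y : Fin d → Finset ℕ) (hY : IsBalancedQuotient S Y)
    (i j : Fin d) {n m : ℕ} (hm : m + (S i).card = (S j).card + n) :
    Nhk (S i) (S j) n = Nhk (Y i) (Y j) m := by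
  set r := quotCard S with hr
  set R := r + (S i).card + (S j).card + n with hR
  have hYi := hY i
  have hYj := hY j
  have hZi : shiftUp (Y i) (R - r) = shiftUp (S i) (R - (S i).card) := by
    apply beta_ext
    · rw [card_shiftUp, card_shiftUp, hYi.1, ← hr]; omega
    · rw [partitionOf_shiftUp, partitionOf_shiftUp, hYi.2]
  have hZj : shiftUp (Y j) (R - r) = shiftUp (S j) (R - (S j).card) := by
    apply beta_ext
    · rw [card_shiftUp, card_shiftUp, hYj.1, ← hr]; omega
    · rw [partitionOf_shiftUp, partitionOf_shiftUp, hYj.2]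
  symm
  calc Nhk (Y i) (Y j) m = Nhk (shiftUp (Y i) (R - r)) (shiftUp (Y j) (R - r)) m :=
        (Nhk_shiftUp_shiftUp _ _ _ _).symm
    _ = Nhk (shiftUp (S i) (R - (S i).card)) (shiftUp (S j) (R - (S j).card)) m := by
        rw [hZi, hZj]
    _ = Nhk (shiftUp (S i) (R - (S i).card)) (S j) (n + R - (S i).card) := by
        have h8 := Nhk_shiftUp_right (shiftUp (S i) (R - (S i).card)) (S j)
          (t := R - (S j).card) (m := n + R - (S i).card) (by omega)
        rw [show n + R - (S i).card - (R - (S j).card) = m from by omega] at h8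
        exact h8
    _ = Nhk (S i) (S j) n := by
        have h9 := Nhk_shiftUp_left (S i) (S j) (R - (S i).card) n
        rw [show n + (R - (S i).card) = n + R - (S i).card from by omega] at h9
        exact h9

lemma nhk_quot_eq' {d : ℕ} (S Y : Fin d → Finset ℕ) (hY : IsBalancedQuotient S Y)
    (i j : Fin d) {n m : ℕ} (hm : m + (S j).card + n = (S i).card) :
    Nhk (S i) (S j) n = m + Nhk (Y j) (Y i) m := by
  set r := quotCard S with hr
  set R := r + (S i).card + (S j).card + n with hR
  have hYi := hY i
  have hYj := hY j
  have hZi : shiftUp (Y i) (R - r) = shiftUp (S i) (R - (S i).card) := by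
    apply beta_ext
    · rw [card_shiftUp, card_shiftUp, hYi.1, ← hr]; omega
    · rw [partitionOf_shiftUp, partitionOf_shiftUp, hYi.2]
  have hZj : shiftUp (Y j) (R - r) = shiftUp (S j) (R - (S j).card) := by
    apply beta_ext
    · rw [card_shiftUp, card_shiftUp, hYj.1, ← hr]; omega
    · rw [partitionOf_shiftUp, partitionOf_shiftUp, hYj.2]
  have h7 : Nhk (S i) (S j) n
      = Nhk (shiftUp (S i) (R - (S i).card)) (shiftUp (S j) (R - (S i).card)) n :=
    (Nhk_shiftUp_shiftUp _ _ _ _).symm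
  have hb := Nhk_master_b (shiftUp (S i) (R - (S i).card)) (shiftUp (S j) (R - (S i).card))
    (n := n) (Δ := (S i).card - (S j).card)
    (by rw [card_shiftUp, card_shiftUp]; omega) (by omega)
  rw [shiftUp_shiftUp, show (R - (S i).card) + ((S i).card - (S j).card) = R - (S j).card
    from by omega] at hb
  rw [show (S i).card - (S j).card - n = m from by omega] at hb
  have hq : Nhk (shiftUp (S j) (R - (S j).card)) (shiftUp (S i) (R - (S i).card)) m
      = Nhk (Y j) (Y i) m := by
    rw [← hZi, ← hZj]
    exact Nhk_shiftUp_shiftUp _ _ _ _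
  rw [h7, hb, hq]

lemma key_count {d : ℕ} (S Y : Fin d → Finset ℕ) (hY : IsBalancedQuotient S Y)
    (i j : Fin d) (n : ℕ) (sbY : ℕ)
    (hsbY : (Finset.univ.sup fun i => (Y i).sup id) ≤ sbY) :
    (Hij S i j n).card = (Hij (coreSymbol S) i j n).card
      + (if (S i).card ≤ (S j).card + n ∧ (1 ≤ n ∨ j < i)
            ∧ (S j).card + n - (S i).card ≤ sbY
          then (Hij Y i j ((S j).card + n - (S i).card)).card else 0)
      + (if (S j).card + n ≤ (S i).card ∧ (1 ≤ n ∨ j ≤ i)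
            ∧ (S i).card - (S j).card - n ≤ sbY
          then (Hij Y j i ((S i).card - (S j).card - n)).card else 0) := by
  rw [hij_card S i j n, hij_card (coreSymbol S) i j n]
  by_cases hleg : 1 ≤ n ∨ j < i
  · rw [if_pos hleg, if_pos hleg]
    have hcore : Nhk (coreSymbol S i) (coreSymbol S j) n
        = (S i).card - (S j).card - n := Nhk_range _ _ _
    rw [hcore]
    have hleg2 : 1 ≤ n ∨ j ≤ i := by
      rcases hleg with h | h
      · exact Or.inl h
      · exact Or.inr h.le
    rcases Nat.lt_trichotomy ((S j).card + n) ((S i).card) with hlt | heq | hgt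
    · -- strictly more boxes in column i : swapped quotient position (j,i)
      rw [if_neg (fun hc => absurd hc.1 (by omega))]
      by_cases hC : (S i).card - (S j).card - n ≤ sbY
      · rw [if_pos ⟨by omega, hleg2, hC⟩, hij_card Y j i _, if_pos (Or.inl (by omega))]
        have hq := nhk_quot_eq' S Y hY i j (n := n) (m := (S i).card - (S j).card - n)
          (by omega)
        omega
      · rw [if_neg (fun hc => hC hc.2.2)]
        have h0 : Nhk (Y j) (Y i) ((S i).card - (S j).card - n) = 0 :=
          nhk_zero_of_large (by omega)
        have hq := nhk_quot_eq' S Y hY i j (n := n) (m := (S i).card - (S j).card - n)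
          (by omega)
        omega
    · -- tie
      have hm1 : (S j).card + n - (S i).card = 0 := by omega
      have hm2 : (S i).card - (S j).card - n = 0 := by omega
      rw [if_pos ⟨by omega, hleg, by omega⟩, if_pos ⟨by omega, hleg2, by omega⟩,
        hm1, hm2, hij_card Y i j 0, hij_card Y j i 0]
      have hne : i ≠ j := by
        rintro rfl
        rcases hleg with h | h
        · omega
        · exact absurd h (lt_irrefl _)
      have hq := nhk_quot_eq S Y hY i j (n := n) (m := 0) (by omega)
      have hsym : Nhk (Y i) (Y j) 0 = Nhk (Y j) (Y i) 0 :=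
        Nhk_zero_symm (by rw [(hY i).1, (hY j).1])
      rcases lt_or_gt_of_ne hne with hij | hij
      · rw [if_neg (by simp only [not_or]; exact ⟨by omega, asymm hij⟩),
          if_pos (Or.inr hij)]
        omega
      · rw [if_pos (Or.inr hij),
          if_neg (by simp only [not_or]; exact ⟨by omega, asymm hij⟩)]
        omega
    · -- strictly more boxes in column j : direct quotient position (i,j)
      by_cases hC : (S j).card + n - (S i).card ≤ sbY
      · rw [if_pos ⟨by omega, hleg, hC⟩, if_neg (fun hc => absurd hc.1 (by omega)),
          hij_card Y i j _, if_pos (Or.inl (by omega))]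
        have hq := nhk_quot_eq S Y hY i j (n := n) (m := (S j).card + n - (S i).card)
          (by omega)
        omega
      · rw [if_neg (fun hc => hC hc.2.2), if_neg (fun hc => absurd hc.1 (by omega))]
        have h0 : Nhk (Y i) (Y j) ((S j).card + n - (S i).card) = 0 :=
          nhk_zero_of_large (by omega)
        have hq := nhk_quot_eq S Y hY i j (n := n) (m := (S j).card + n - (S i).card)
          (by omega)
        omega
  · rw [if_neg hleg, if_neg hleg, if_neg (fun hc => hleg hc.2.1)]
    push_neg at hleg
    obtain ⟨hn, hij⟩ := hleg
    split_ifs with h2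
    · have hji : j ≤ i := by
        rcases h2.2.1 with h | h
        · omega
        · exact h
      have hije : i = j := le_antisymm hij hji
      have hm0 : (S i).card - (S j).card - n = 0 := by rw [hije]; omega
      rw [hm0, hij_card Y j i 0, if_neg (by
        simp only [not_or]
        refine ⟨by omega, ?_⟩
        rw [hije]
        exact lt_irrefl _)]
    · simp

lemma val_nonneg {d n i j : ℕ} (hdj : j < d) (h : 1 ≤ n ∨ j ≤ i) :
    (0:ℝ) ≤ (d:ℝ) * n + i - j := by
  rcases h with h | h
  · have h1 : (1:ℝ) ≤ n := by exact_mod_cast h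
    have h2 : (j:ℝ) < d := by exact_mod_cast hdj
    have h3 : (0:ℝ) ≤ i := Nat.cast_nonneg i
    have h4 : (d:ℝ) * 1 ≤ (d:ℝ) * n := by
      apply mul_le_mul_of_nonneg_left h1 (Nat.cast_nonneg d)
    linarith
  · have h1 : (j:ℝ) ≤ i := by exact_mod_cast h
    have h2 : (0:ℝ) ≤ (d:ℝ) * n := by positivity
    linarith

lemma gval_direct {d : ℕ} (S : Fin d → Finset ℕ) {Y : Fin d → Finset ℕ} {i j : Fin d}
    {n m : ℕ} (hm : m + (S i).card = (S j).card + n) (hleg : 1 ≤ n ∨ j < i)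
    {z : ℕ × ℕ × Fin d × Fin d} (hz : z ∈ Hij Y i j m) :
    |hookLen (fun i => ((i : ℕ) : ℝ) + ((S i).card : ℝ) * (d : ℝ)) (d : ℝ) z|
      = (d:ℝ) * n + ((i : ℕ) : ℝ) - ((j : ℕ) : ℝ) := by
  rw [hookLen_on_hij _ _ hz]
  have hcast : (m:ℝ) + ((S i).card : ℝ) = ((S j).card : ℝ) + n := by exact_mod_cast hm
  have he : (d:ℝ) * m + (((i : ℕ) : ℝ) + ((S i).card : ℝ) * d)
        - (((j : ℕ) : ℝ) + ((S j).card : ℝ) * d)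
      = (d:ℝ) * n + ((i : ℕ) : ℝ) - ((j : ℕ) : ℝ) := by
    linear_combination (d:ℝ) * hcast
  rw [he]
  apply abs_of_nonneg
  apply val_nonneg j.isLt
  rcases hleg with h | h
  · exact Or.inl h
  · exact Or.inr (le_of_lt h)

lemma gval_swap {d : ℕ} (S : Fin d → Finset ℕ) {Y : Fin d → Finset ℕ} {i j : Fin d}
    {n m : ℕ} (hm : m + (S j).card + n = (S i).card) (hleg : 1 ≤ n ∨ j ≤ i)
    {z : ℕ × ℕ × Fin d × Fin d} (hz : z ∈ Hij Y j i m) :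
    |hookLen (fun i => ((i : ℕ) : ℝ) + ((S i).card : ℝ) * (d : ℝ)) (d : ℝ) z|
      = (d:ℝ) * n + ((i : ℕ) : ℝ) - ((j : ℕ) : ℝ) := by
  rw [hookLen_on_hij _ _ hz]
  have hcast : (m:ℝ) + ((S j).card : ℝ) + n = ((S i).card : ℝ) := by exact_mod_cast hm
  have he : (d:ℝ) * m + (((j : ℕ) : ℝ) + ((S j).card : ℝ) * d)
        - (((i : ℕ) : ℝ) + ((S i).card : ℝ) * d)
      = -((d:ℝ) * n + ((i : ℕ) : ℝ) - ((j : ℕ) : ℝ)) := by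
    linear_combination (d:ℝ) * hcast
  rw [he, abs_neg]
  apply abs_of_nonneg
  exact val_nonneg j.isLt hleg

lemma key_multiset {d : ℕ} (S Y : Fin d → Finset ℕ) (hY : IsBalancedQuotient S Y)
    (i j : Fin d) (n : ℕ) (sbY : ℕ)
    (hsbY : (Finset.univ.sup fun i => (Y i).sup id) ≤ sbY) :
    (Hij S i j n).val.map (hookLen (fun i => ((i : ℕ) : ℝ)) (d:ℝ))
      = (Hij (coreSymbol S) i j n).val.map (hookLen (fun i => ((i : ℕ) : ℝ)) (d:ℝ))
        + ((if (S i).card ≤ (S j).card + n ∧ (1 ≤ n ∨ j < i)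
              ∧ (S j).card + n - (S i).card ≤ sbY
            then (Hij Y i j ((S j).card + n - (S i).card)).val.map
              (fun z => |hookLen (fun i => ((i : ℕ) : ℝ) + ((S i).card : ℝ) * (d:ℝ)) (d:ℝ) z|)
            else 0)
          + (if (S j).card + n ≤ (S i).card ∧ (1 ≤ n ∨ j ≤ i)
              ∧ (S i).card - (S j).card - n ≤ sbY
            then (Hij Y j i ((S i).card - (S j).card - n)).val.map
              (fun z => |hookLen (fun i => ((i : ℕ) : ℝ) + ((S i).card : ℝ) * (d:ℝ)) (d:ℝ) z|)
            else 0)) := by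
  have hS : (Hij S i j n).val.map (hookLen (fun i => ((i : ℕ) : ℝ)) (d:ℝ))
      = Multiset.replicate (Hij S i j n).card
        ((d:ℝ) * n + ((i : ℕ) : ℝ) - ((j : ℕ) : ℝ)) :=
    map_const_of_forall (fun z hz => hookLen_on_hij _ _ hz)
  have hC : (Hij (coreSymbol S) i j n).val.map (hookLen (fun i => ((i : ℕ) : ℝ)) (d:ℝ))
      = Multiset.replicate (Hij (coreSymbol S) i j n).card
        ((d:ℝ) * n + ((i : ℕ) : ℝ) - ((j : ℕ) : ℝ)) :=
    map_const_of_forall (fun z hz => hookLen_on_hij _ _ hz)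
  have hkey := key_count S Y hY i j n sbY hsbY
  rw [hS, hC]
  split_ifs with h1 h2 h2
  · rw [if_pos h1, if_pos h2] at hkey
    rw [map_const_of_forall (fun z hz => gval_direct S (by omega) h1.2.1 hz),
      map_const_of_forall (fun z hz => gval_swap S (by omega) h2.2.1 hz),
      hkey, Multiset.replicate_add, Multiset.replicate_add]
    abel
  · rw [if_pos h1, if_neg h2] at hkey
    rw [map_const_of_forall (fun z hz => gval_direct S (by omega) h1.2.1 hz),
      hkey, Multiset.replicate_add, Multiset.replicate_add]
    simp
  · rw [if_neg h1, if_pos h2] at hkey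
    rw [map_const_of_forall (fun z hz => gval_swap S (by omega) h2.2.1 hz),
      hkey, Multiset.replicate_add, Multiset.replicate_add]
    simp
  · rw [if_neg h1, if_neg h2] at hkey
    rw [hkey, Multiset.replicate_add, Multiset.replicate_add]
    simp

lemma quot_decomp {d : ℕ} (S Y : Fin d → Finset ℕ) (g : ℕ × ℕ × Fin d × Fin d → ℝ)
    (sbY mx L : ℕ)
    (hsbY : (Finset.univ.sup fun i => (Y i).sup id) ≤ sbY)
    (hmx : ∀ i, (S i).card ≤ mx)
    (hL : sbY + mx < L) :
    ∑ p ∈ (Finset.univ ×ˢ Finset.univ) ×ˢ Finset.range L,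
        (Hij Y p.1.1 p.1.2 p.2).val.map g
    = ∑ p ∈ (Finset.univ ×ˢ Finset.univ) ×ˢ Finset.range L,
        ((if (S p.1.1).card ≤ (S p.1.2).card + p.2 ∧ (1 ≤ p.2 ∨ p.1.2 < p.1.1)
              ∧ (S p.1.2).card + p.2 - (S p.1.1).card ≤ sbY
            then (Hij Y p.1.1 p.1.2 ((S p.1.2).card + p.2 - (S p.1.1).card)).val.map g
            else 0)
          + (if (S p.1.2).card + p.2 ≤ (S p.1.1).card ∧ (1 ≤ p.2 ∨ p.1.2 ≤ p.1.1)
              ∧ (S p.1.1).card - (S p.1.2).card - p.2 ≤ sbY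
            then (Hij Y p.1.2 p.1.1 ((S p.1.1).card - (S p.1.2).card - p.2)).val.map g
            else 0)) := by
  classical
  rw [Finset.sum_add_distrib]
  rw [← Finset.sum_filter_add_sum_filter_not ((Finset.univ ×ˢ Finset.univ) ×ˢ Finset.range L)
    (fun p => (S p.1.2).card < (S p.1.1).card + p.2
      ∨ ((S p.1.2).card = (S p.1.1).card + p.2 ∧ p.1.2 < p.1.1))
    (fun p => (Hij Y p.1.1 p.1.2 p.2).val.map g)]
  congr 1
  · -- direct part
    rw [← Finset.sum_filter]
    have hshrink : ∑ p ∈ ((Finset.univ ×ˢ Finset.univ) ×ˢ Finset.range L).filter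
          (fun p => (S p.1.2).card < (S p.1.1).card + p.2
            ∨ ((S p.1.2).card = (S p.1.1).card + p.2 ∧ p.1.2 < p.1.1)),
          (Hij Y p.1.1 p.1.2 p.2).val.map g
        = ∑ p ∈ ((Finset.univ ×ˢ Finset.univ) ×ˢ Finset.range L).filter
          (fun p => ((S p.1.2).card < (S p.1.1).card + p.2
            ∨ ((S p.1.2).card = (S p.1.1).card + p.2 ∧ p.1.2 < p.1.1)) ∧ p.2 ≤ sbY),
          (Hij Y p.1.1 p.1.2 p.2).val.map g := by
      symm
      apply Finset.sum_subset
      · intro p hp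
        simp only [mem_filter] at hp ⊢
        exact ⟨hp.1, hp.2.1⟩
      · intro p hp hnp
        simp only [mem_filter] at hp hnp
        have hbig : sbY < p.2 := by
          by_contra hc
          exact hnp ⟨hp.1, hp.2, by omega⟩
        rw [hij_empty Y _ _ (by omega)]
        simp
    rw [hshrink]
    apply Finset.sum_nbij'
      (i := fun p => (((p.1.1, p.1.2), p.2 + (S p.1.1).card - (S p.1.2).card) :
        (Fin d × Fin d) × ℕ))
      (j := fun q => (((q.1.1, q.1.2), (S q.1.2).card + q.2 - (S q.1.1).card) :
        (Fin d × Fin d) × ℕ))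
    · intro p hp
      simp only [mem_filter, mem_product, mem_range, mem_univ, true_and] at hp ⊢
      obtain ⟨hrange, hP, hsmall⟩ := hp
      have hxm := hmx p.1.1
      refine ⟨by omega, by omega, ?_, by omega⟩
      rcases hP with h | ⟨h, hlt⟩
      · exact Or.inl (by omega)
      · exact Or.inr hlt
    · intro q hq
      simp only [mem_filter, mem_product, mem_range, mem_univ, true_and] at hq ⊢
      obtain ⟨hrange, hc1, hc2, hc3⟩ := hq
      have hxm := hmx q.1.1
      refine ⟨by omega, ?_, by omega⟩
      rcases hc2 with h | hlt
      · exact Or.inl (by omega)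
      · rcases Nat.eq_zero_or_pos q.2 with hq0 | hq0
        · exact Or.inr ⟨by omega, hlt⟩
        · exact Or.inl (by omega)
    · intro p hp
      simp only [mem_filter, mem_product, mem_range, mem_univ, true_and] at hp
      obtain ⟨hrange, hP, hsmall⟩ := hp
      have hle : (S p.1.2).card ≤ (S p.1.1).card + p.2 := by
        rcases hP with h | ⟨h, _⟩ <;> omega
      obtain ⟨⟨pi, pj⟩, pn⟩ := p
      simp only at hle ⊢
      simp only [Prod.mk.injEq]
      refine ⟨by simp, by omega⟩
    · intro q hq
      simp only [mem_filter, mem_product, mem_range, mem_univ, true_and] at hq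
      obtain ⟨hrange, hc1, hc2, hc3⟩ := hq
      obtain ⟨⟨qi, qj⟩, qn⟩ := q
      simp only at hc1 ⊢
      simp only [Prod.mk.injEq]
      refine ⟨by simp, by omega⟩
    · intro p hp
      simp only [mem_filter, mem_product, mem_range, mem_univ, true_and] at hp
      obtain ⟨hrange, hP, hsmall⟩ := hp
      have hle : (S p.1.2).card ≤ (S p.1.1).card + p.2 := by
        rcases hP with h | ⟨h, _⟩ <;> omega
      dsimp only
      rw [show (S p.1.2).card + (p.2 + (S p.1.1).card - (S p.1.2).card) - (S p.1.1).card
        = p.2 from by omega]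
  · -- swapped part
    rw [← Finset.sum_filter]
    have hshrink : ∑ p ∈ ((Finset.univ ×ˢ Finset.univ) ×ˢ Finset.range L).filter
          (fun p => ¬((S p.1.2).card < (S p.1.1).card + p.2
            ∨ ((S p.1.2).card = (S p.1.1).card + p.2 ∧ p.1.2 < p.1.1))),
          (Hij Y p.1.1 p.1.2 p.2).val.map g
        = ∑ p ∈ ((Finset.univ ×ˢ Finset.univ) ×ˢ Finset.range L).filter
          (fun p => ¬((S p.1.2).card < (S p.1.1).card + p.2
            ∨ ((S p.1.2).card = (S p.1.1).card + p.2 ∧ p.1.2 < p.1.1)) ∧ p.2 ≤ sbY),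
          (Hij Y p.1.1 p.1.2 p.2).val.map g := by
      symm
      apply Finset.sum_subset
      · intro p hp
        simp only [mem_filter] at hp ⊢
        exact ⟨hp.1, hp.2.1⟩
      · intro p hp hnp
        simp only [mem_filter] at hp hnp
        have hbig : sbY < p.2 := by
          by_contra hc
          exact hnp ⟨hp.1, hp.2, by omega⟩
        rw [hij_empty Y _ _ (by omega)]
        simp
    rw [hshrink]
    apply Finset.sum_nbij'
      (i := fun p => (((p.1.2, p.1.1), (S p.1.2).card - (S p.1.1).card - p.2) :
        (Fin d × Fin d) × ℕ))
      (j := fun q => (((q.1.2, q.1.1), (S q.1.1).card - (S q.1.2).card - q.2) :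
        (Fin d × Fin d) × ℕ))
    · intro p hp
      simp only [mem_filter, mem_product, mem_range, mem_univ, true_and, not_or, not_and,
        not_lt] at hp ⊢
      obtain ⟨hrange, ⟨hP1, hP2⟩, hsmall⟩ := hp
      have hxm := hmx p.1.2
      refine ⟨by omega, by omega, ?_, by omega⟩
      rcases Nat.lt_or_ge ((S p.1.1).card + p.2) ((S p.1.2).card) with h' | h'
      · exact Or.inl (by omega)
      · have heq : (S p.1.2).card = (S p.1.1).card + p.2 := by omega
        exact Or.inr (hP2 heq)
    · intro q hq
      simp only [mem_filter, mem_product, mem_range, mem_univ, true_and, not_or, not_and,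
        not_lt] at hq ⊢
      obtain ⟨hrange, hc1, hc2, hc3⟩ := hq
      have hxm := hmx q.1.1
      refine ⟨by omega, ⟨by omega, ?_⟩, by omega⟩
      intro heq
      have hq0 : q.2 = 0 := by omega
      rcases hc2 with h | hle
      · omega
      · exact hle
    · intro p hp
      simp only [mem_filter, mem_product, mem_range, mem_univ, true_and, not_or, not_and,
        not_lt] at hp
      obtain ⟨hrange, ⟨hP1, hP2⟩, hsmall⟩ := hp
      obtain ⟨⟨pi, pj⟩, pn⟩ := p
      simp only at hP1 ⊢
      simp only [Prod.mk.injEq]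
      refine ⟨by simp, by omega⟩
    · intro q hq
      simp only [mem_filter, mem_product, mem_range, mem_univ, true_and] at hq
      obtain ⟨hrange, hc1, hc2, hc3⟩ := hq
      obtain ⟨⟨qi, qj⟩, qn⟩ := q
      simp only at hc1 ⊢
      simp only [Prod.mk.injEq]
      refine ⟨by simp, by omega⟩
    · intro p hp
      simp only [mem_filter, mem_product, mem_range, mem_univ, true_and, not_or, not_and,
        not_lt] at hp
      obtain ⟨hrange, ⟨hP1, hP2⟩, hsmall⟩ := hp
      dsimp only
      rw [show (S p.1.2).card - (S p.1.1).card - ((S p.1.2).card - (S p.1.1).card - p.2)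
        = p.2 from by omega]

end BGOaux


open BGOaux

/-- With `δ* = (0,1,…,d−1; d)` and `δ*_S = (x_0 d, 1 + x_1 d, …, (d−1) + x_{d−1} d; d)`:
`𝓗^{δ*}(S) = 𝓗^{δ*}(C) ∪ abs(𝓗^{δ*_S}(Q))` as multisets. -/
theorem hookLens_partition_tuple_eq (d : ℕ) (hd : 0 < d) (S Y : Fin d → Finset ℕ)
    (hY : IsBalancedQuotient S Y) :
    hookLens (fun i => ((i : ℕ) : ℝ)) (d : ℝ) S =
      hookLens (fun i => ((i : ℕ) : ℝ)) (d : ℝ) (coreSymbol S) +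
        (hookLens (fun i => ((i : ℕ) : ℝ) + ((S i).card : ℝ) * (d : ℝ)) (d : ℝ) Y).map
          (fun r => |r|) := by
  classical
  set sbS := Finset.univ.sup fun i => (S i).sup id with hsbS
  set sbC := Finset.univ.sup fun i => ((coreSymbol S) i).sup id with hsbC
  set sbY := Finset.univ.sup fun i => (Y i).sup id with hsbYdef
  set mx := Finset.univ.sup fun i => (S i).card with hmx0
  set L := sbS + sbC + sbY + mx + 1 with hLdef
  have hmx : ∀ i, (S i).card ≤ mx :=
    fun i => Finset.le_sup (f := fun i => (S i).card) (Finset.mem_univ i)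
  have h1 : sbS < L := by omega
  have h2 : sbC < L := by omega
  have h3 : sbY < L := by omega
  have hLb : sbY + mx < L := by omega
  have e1 : hookLens (fun i => ((i : ℕ) : ℝ)) (d : ℝ) S
      = ∑ p ∈ (Finset.univ ×ˢ Finset.univ) ×ˢ Finset.range L,
          (Hij S p.1.1 p.1.2 p.2).val.map (hookLen (fun i => ((i : ℕ) : ℝ)) (d:ℝ)) :=
    symbolHooks_decomp S _ h1
  have e2 : hookLens (fun i => ((i : ℕ) : ℝ)) (d : ℝ) (coreSymbol S)
      = ∑ p ∈ (Finset.univ ×ˢ Finset.univ) ×ˢ Finset.range L,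
          (Hij (coreSymbol S) p.1.1 p.1.2 p.2).val.map
            (hookLen (fun i => ((i : ℕ) : ℝ)) (d:ℝ)) :=
    symbolHooks_decomp (coreSymbol S) _ h2
  have e3 : (hookLens (fun i => ((i : ℕ) : ℝ) + ((S i).card : ℝ) * (d : ℝ)) (d : ℝ) Y).map
        (fun r => |r|)
      = ∑ p ∈ (Finset.univ ×ˢ Finset.univ) ×ˢ Finset.range L,
          (Hij Y p.1.1 p.1.2 p.2).val.map
            (fun z => |hookLen (fun i => ((i : ℕ) : ℝ) + ((S i).card : ℝ) * (d:ℝ)) (d:ℝ) z|) := by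
    unfold hookLens
    rw [Multiset.map_map]
    exact symbolHooks_decomp Y _ h3
  rw [e1, e2, e3, quot_decomp S Y _ sbY mx L (le_refl _) hmx hLb, ← Finset.sum_add_distrib]
  exact Finset.sum_congr rfl fun p _ => key_multiset S Y hY p.1.1 p.1.2 p.2 sbY (le_refl _)
end
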